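/- arXiv:1906.02449 — 10 statements merged into one kernel-verified Lean document; each statement's English description precedes it below -/
import Mathlib

section
/- Let X be a normed space and (x_n) a sequence in X. If for every strictly increasing function s : ℕ → ℕ the sequence of partial sums (∑_{i=1}^n x_{s(i)})_n is bounded, then there exists M' > 0 such that for every strictly increasing s : ℕ → ℕ and every n, ‖∑_{i=1}^n x_{s(i)}‖ ≤ M'. -/
open Filter

theorem subseries_bounded_uniform
    {X : Type*} [NormedAddCommGroup X] [NormedSpace ℝ X] (x : ℕ → X)
    (h : ∀ s : ℕ → ℕ, StrictMono s →
      ∃ M : ℝ, ∀ n : ℕ, ‖∑ i ∈ Finset.range n, x (s i)‖ ≤ M) :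
    ∃ M' > (0 : ℝ), ∀ s : ℕ → ℕ, StrictMono s →
      ∀ n : ℕ, ‖∑ i ∈ Finset.range n, x (s i)‖ ≤ M' := by
  classical
  by_contra hcon
  push_neg at hcon
  -- Step 1: arbitrary finite sets have unbounded sums
  have hT : ∀ M : ℝ, ∃ T : Finset ℕ, M < ‖∑ i ∈ T, x i‖ := by
    intro M
    obtain ⟨s, hs, n, hn⟩ := hcon (max M 0 + 1) (by positivity)
    refine ⟨(Finset.range n).image s, ?_⟩
    rw [Finset.sum_image (fun a _ b _ hab => hs.injective hab)]
    calc M ≤ max M 0 := le_max_left _ _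
    _ < max M 0 + 1 := by linarith
    _ < _ := hn
  -- Step 2: choose finite sets with large sums, avoiding an initial segment
  have key : ∀ (k b : ℕ), ∃ g : Finset ℕ,
      ((k : ℝ) + 1 < ‖∑ i ∈ g, x i‖) ∧ ∀ a ∈ g, b ≤ a := by
    intro k b
    obtain ⟨T, hT⟩ := hT ((k : ℝ) + 1 + ∑ i ∈ Finset.range b, ‖x i‖)
    refine ⟨T \ Finset.range b, ?_, fun a ha => ?_⟩
    · have hsplit : ∑ i ∈ T ∩ Finset.range b, x i + ∑ i ∈ T \ Finset.range b, x i
          = ∑ i ∈ T, x i := Finset.sum_inter_add_sum_sdiff _ _ _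
      have h1 : ‖∑ i ∈ T ∩ Finset.range b, x i‖ ≤ ∑ i ∈ Finset.range b, ‖x i‖ := by
        calc ‖∑ i ∈ T ∩ Finset.range b, x i‖ ≤ ∑ i ∈ T ∩ Finset.range b, ‖x i‖ :=
              norm_sum_le _ _
        _ ≤ ∑ i ∈ Finset.range b, ‖x i‖ :=
            Finset.sum_le_sum_of_subset_of_nonneg (Finset.inter_subset_right)
              (fun _ _ _ => norm_nonneg _)
      have h2 : ‖∑ i ∈ T, x i‖ ≤ ‖∑ i ∈ T ∩ Finset.range b, x i‖ +
          ‖∑ i ∈ T \ Finset.range b, x i‖ := by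
        rw [← hsplit]; exact norm_add_le _ _
      linarith
    · simpa using (Finset.mem_sdiff.mp ha).2
  choose G hG1 hG2 using key
  -- the sequence of lower bounds and the sets
  set b : ℕ → ℕ := fun k => Nat.rec 0 (fun k bk => (G k bk).sup id + 1) k with hb
  set g : ℕ → Finset ℕ := fun k => G k (b k) with hgdef
  have hg1 : ∀ k : ℕ, (k : ℝ) + 1 < ‖∑ i ∈ g k, x i‖ := fun k => hG1 k (b k)
  have hg2 : ∀ k, ∀ a ∈ g k, b k ≤ a := fun k => hG2 k (b k)
  have hg3 : ∀ k, ∀ a ∈ g k, a < b (k + 1) := by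
    intro k a ha
    have : a ≤ (g k).sup id := Finset.le_sup (f := id) ha
    simpa [hb] using Nat.lt_succ_of_le this
  have hgne : ∀ k, (g k).Nonempty := by
    intro k
    rcases Finset.eq_empty_or_nonempty (g k) with he | hne
    · have := hg1 k; rw [he] at this; simp at this
      nlinarith [this, Nat.cast_nonneg (α := ℝ) k]
    · exact hne
  have hbmono : Monotone b := by
    apply monotone_nat_of_le_succ
    intro k
    obtain ⟨a, ha⟩ := hgne k
    exact le_of_lt (lt_of_le_of_lt (hg2 k a ha) (hg3 k a ha))
  have hcross : ∀ {k l : ℕ}, k < l → ∀ a ∈ g k, ∀ c ∈ g l, a < c := by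
    intro k l hkl a ha c hc
    exact lt_of_lt_of_le (hg3 k a ha) (le_trans (hbmono hkl) (hg2 l c hc))
  -- the infinite set of all indices used
  set p : ℕ → Prop := fun m => ∃ k, m ∈ g k with hp
  have hinf : (setOf p).Infinite := by
    refine Set.infinite_of_injective_forall_mem
      (f := fun k : ℕ => (g k).min' (hgne k)) ?_ ?_
    · have hsm : StrictMono fun k : ℕ => (g k).min' (hgne k) := by
        intro k l hkl
        exact hcross hkl _ ((g k).min'_mem (hgne k)) _ ((g l).min'_mem (hgne l))
      exact hsm.injective
    · intro k; exact ⟨k, (g k).min'_mem (hgne k)⟩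
  set s : ℕ → ℕ := Nat.nth p with hsdef
  have hs : StrictMono s := Nat.nth_strictMono hinf
  set U : ℕ → Finset ℕ := fun k => (Finset.range (k + 1)).biUnion g with hU
  have hUmem : ∀ {m k}, m ∈ U k ↔ ∃ j ≤ k, m ∈ g j := by
    intro m k
    simp [hU, Finset.mem_biUnion, Nat.lt_succ_iff]
  -- main claim: partial sums of the subseries at card (U k) equal sums over U k
  have main : ∀ k, ∑ i ∈ Finset.range (U k).card, x (s i) = ∑ m ∈ U k, x m := by
    intro k
    apply Finset.sum_bij (i := fun i _ => s i)
    · -- maps into U k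
      intro i hi
      simp only [Finset.mem_range] at hi
      by_contra hnot
      have hpm : p (s i) := Nat.nth_mem_of_infinite hinf i
      obtain ⟨l, hl⟩ := hpm
      have hlk : k < l := by
        by_contra hlk
        push_neg at hlk
        exact hnot (hUmem.mpr ⟨l, hlk, hl⟩)
      have hsub : U k ⊆ (Finset.range (s i)).filter p := by
        intro m hm
        obtain ⟨j, hj, hmj⟩ := hUmem.mp hm
        refine Finset.mem_filter.mpr ⟨Finset.mem_range.mpr ?_, ⟨j, hmj⟩⟩
        exact hcross (lt_of_le_of_lt hj hlk) m hmj _ hl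
      have hcount : (U k).card ≤ Nat.count p (s i) := by
        rw [Nat.count_eq_card_filter_range]
        exact Finset.card_le_card hsub
      rw [Nat.count_nth_of_infinite hinf] at hcount
      omega
    · -- injective
      intro i hi j hj hij
      exact hs.injective hij
    · -- surjective
      intro m hm
      have hpm : p m := by
        obtain ⟨j, _, hmj⟩ := hUmem.mp hm
        exact ⟨j, hmj⟩
      refine ⟨Nat.count p m, ?_, Nat.nth_count hpm⟩
      simp only [Finset.mem_range]
      have hsub : (Finset.range m).filter p ⊆ (U k).erase m := by
        intro j hj
        obtain ⟨hjm, l, hjl⟩ := Finset.mem_filter.mp hj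
        rw [Finset.mem_range] at hjm
        have hlk : l ≤ k := by
          by_contra hlk
          push_neg at hlk
          obtain ⟨j₀, hj₀, hmj₀⟩ := hUmem.mp hm
          have := hcross (lt_of_le_of_lt hj₀ hlk) m hmj₀ j hjl
          omega
        exact Finset.mem_erase.mpr ⟨by omega, hUmem.mpr ⟨l, hlk, hjl⟩⟩
      have h1 : Nat.count p m ≤ ((U k).erase m).card := by
        rw [Nat.count_eq_card_filter_range]
        exact Finset.card_le_card hsub
      have h2 : ((U k).erase m).card < (U k).card :=
        Finset.card_erase_lt_of_mem hm
      omega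
    · intro i hi; rfl
  -- use boundedness of this single subseries
  obtain ⟨M, hM⟩ := h s hs
  -- U (k+1) splits as U k and g (k+1), disjointly
  have hdisj : ∀ k, Disjoint (U k) (g (k + 1)) := by
    intro k
    rw [Finset.disjoint_left]
    intro m hm hmg
    obtain ⟨j, hj, hmj⟩ := hUmem.mp hm
    have := hcross (Nat.lt_succ_of_le hj) m hmj m hmg
    omega
  have hUsucc : ∀ k, U (k + 1) = U k ∪ g (k + 1) := by
    intro k
    ext m
    simp only [hUmem, Finset.mem_union]
    constructor
    · rintro ⟨j, hj, hmj⟩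
      rcases Nat.lt_succ_iff_lt_or_eq.mp (Nat.lt_succ_of_le hj) with h' | h'
      · exact Or.inl ⟨j, Nat.lt_succ_iff.mp h', hmj⟩
      · exact Or.inr (h' ▸ hmj)
    · rintro (⟨j, hj, hmj⟩ | hmg)
      · exact ⟨j, le_trans hj (Nat.le_succ k), hmj⟩
      · exact ⟨k + 1, le_refl _, hmg⟩
  have hbound : ∀ k, ‖∑ m ∈ g (k + 1), x m‖ ≤ 2 * M := by
    intro k
    have hsum : ∑ m ∈ U (k + 1), x m = ∑ m ∈ U k, x m + ∑ m ∈ g (k + 1), x m := by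
      rw [hUsucc k, Finset.sum_union (hdisj k)]
    have e1 := main k
    have e2 := main (k + 1)
    have b1 := hM (U k).card
    have b2 := hM (U (k + 1)).card
    rw [e1] at b1
    rw [e2, hsum] at b2
    calc ‖∑ m ∈ g (k + 1), x m‖
        = ‖(∑ m ∈ U k, x m + ∑ m ∈ g (k + 1), x m) - ∑ m ∈ U k, x m‖ := by
          congr 1; abel
    _ ≤ ‖∑ m ∈ U k, x m + ∑ m ∈ g (k + 1), x m‖ + ‖∑ m ∈ U k, x m‖ :=
        norm_sub_le _ _
    _ ≤ 2 * M := by linarith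
  obtain ⟨k, hk⟩ := exists_nat_gt (2 * M)
  have h1 := hg1 (k + 1)
  have h2 := hbound k
  push_cast at h1
  linarith
end

section
/- Let X be a normed space and (x_n) a sequence in X. If for every bijection p : ℕ → ℕ the sequence of partial sums (∑_{i=1}^n x_{p(i)})_n is bounded, then for every strictly increasing s : ℕ → ℕ the sequence (∑_{i=1}^n x_{s(i)})_n is bounded. -/
private lemma list_sum_eq_finset_sum {X : Type*} [AddCommMonoid X] (x : ℕ → X)
    (l : List ℕ) (t : Finset ℕ) (ht : (↑l : Multiset ℕ) = t.val) :
    (l.map x).sum = ∑ j ∈ t, x j := by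
  rw [← Finset.sum_map_val, ← ht, Multiset.map_coe, Multiset.sum_coe]

theorem rearrangements_bounded_implies_subseries_bounded
    {X : Type*} [NormedAddCommGroup X] [NormedSpace ℝ X] (x : ℕ → X)
    (h : ∀ p : ℕ → ℕ, Function.Bijective p →
      ∃ M : ℝ, ∀ n : ℕ, ‖∑ i ∈ Finset.range n, x (p i)‖ ≤ M) :
    ∀ s : ℕ → ℕ, StrictMono s →
      ∃ M : ℝ, ∀ n : ℕ, ‖∑ i ∈ Finset.range n, x (s i)‖ ≤ M := by
  intro s hs
  by_contra hB
  push_neg at hB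
  obtain ⟨M0, hM0⟩ := h id Function.bijective_id
  simp only [id_eq] at hM0
  set A : ℕ → X := fun m => ∑ i ∈ Finset.range m, x (s i) with hA
  -- an unbounded "jump" subsequence
  have key : ∀ m : ℕ, ∀ C : ℝ, ∃ nn, m < nn ∧ C < ‖A nn‖ := by
    intro m C
    obtain ⟨nn, hnn⟩ :=
      hB (max C ((Finset.range (m + 1)).sup' (by simp) fun i => ‖A i‖))
    rcases le_or_gt nn m with hle | hlt
    · exact absurd
        ((Finset.le_sup' (f := fun i => ‖A i‖)
          (Finset.mem_range.mpr (Nat.lt_succ_of_le hle))).trans (le_max_right C _))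
        (not_le.mpr hnn)
    · exact ⟨nn, hlt, (le_max_left _ _).trans_lt hnn⟩
  choose f hf1 hf2 using key
  set n : ℕ → ℕ := fun k => Nat.rec 0 (fun j nj => f nj (‖A nj‖ + j + 1)) k with hn
  have hnlt : ∀ k, n k < n (k + 1) := fun k => hf1 _ _
  have hnA : ∀ k, ‖A (n k)‖ + k + 1 < ‖A (n (k + 1))‖ := fun k => hf2 _ _
  have hnmono : StrictMono n := strictMono_nat_of_lt_succ hnlt
  -- block boundaries
  set d : ℕ → ℕ := fun k => Nat.rec 0 (fun j _ => s (n (j + 1))) k with hd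
  have hd0 : d 0 = 0 := rfl
  have hdsucc : ∀ k, d (k + 1) = s (n (k + 1)) := fun k => rfl
  have hdlt : ∀ k, d k < d (k + 1) := by
    intro k
    cases k with
    | zero =>
      show 0 < s (n 1)
      exact lt_of_lt_of_le (show 0 < n 1 from hnlt 0) hs.le_apply
    | succ j =>
      show s (n (j + 1)) < s (n (j + 2))
      exact hs (hnlt (j + 1))
  have hdmono : StrictMono d := strictMono_nat_of_lt_succ hdlt
  have hdk : ∀ k, k ≤ d k := fun k => hdmono.le_apply
  have hdle : ∀ k, d k ≤ s (n k) := by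
    intro k
    cases k with
    | zero => exact Nat.zero_le _
    | succ j => exact le_of_eq (hdsucc j)
  -- blocks and subseries parts
  set F : ℕ → Finset ℕ :=
    fun k => (Finset.range (n (k + 1)) \ Finset.range (n k)).image s with hF
  set B : ℕ → Finset ℕ :=
    fun k => Finset.range (d (k + 1)) \ Finset.range (d k) with hBdef
  have hFB : ∀ k, F k ⊆ B k := by
    intro k y hy
    simp only [hF, hBdef, Finset.mem_image, Finset.mem_sdiff, Finset.mem_range,
      not_lt] at hy ⊢
    obtain ⟨i, ⟨hi2, hi1⟩, rfl⟩ := hy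
    constructor
    · rw [hdsucc k]; exact hs hi2
    · exact (hdle k).trans (hs.monotone hi1)
  -- the rearranged lists
  set L : ℕ → List ℕ :=
    fun k => ((B k \ F k).sort (· ≤ ·)) ++ ((F k).sort (· ≤ ·)) with hL
  set Lfull : ℕ → List ℕ := fun k => Nat.rec [] (fun j l => l ++ L j) k with hLf
  have hLfsucc : ∀ k, Lfull (k + 1) = Lfull k ++ L k := fun k => rfl
  have hLval : ∀ k, (↑(L k) : Multiset ℕ) = (B k).val := by
    intro k
    show ((↑(((B k \ F k).sort (· ≤ ·)) ++ ((F k).sort (· ≤ ·))) : Multiset ℕ)) = _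
    rw [← Multiset.coe_add, Finset.sort_eq, Finset.sort_eq, Finset.sdiff_val,
      tsub_add_cancel_of_le (Finset.val_le_iff.mpr (hFB k))]
  have hLfullval : ∀ k, (↑(Lfull k) : Multiset ℕ) = (Finset.range (d k)).val := by
    intro k
    induction k with
    | zero => simp [hLf, hd0]
    | succ j ih =>
      rw [hLfsucc j, ← Multiset.coe_add, ih, hLval j]
      show (Finset.range (d j)).val
        + (Finset.range (d (j + 1)) \ Finset.range (d j)).val
        = (Finset.range (d (j + 1))).val
      have hsub : Finset.range (d j) ⊆ Finset.range (d (j + 1)) :=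
        Finset.range_subset_range.mpr (hdlt j).le
      rw [Finset.sdiff_val, add_comm,
        tsub_add_cancel_of_le (Finset.val_le_iff.mpr hsub)]
  have hlen : ∀ k, (Lfull k).length = d k := by
    intro k
    have := congrArg Multiset.card (hLfullval k)
    simpa using this
  have hnodup : ∀ k, (Lfull k).Nodup := by
    intro k
    have := (Finset.range (d k)).nodup
    rw [← hLfullval k] at this
    exact this
  have hmem : ∀ k y, y ∈ Lfull k ↔ y < d k := by
    intro k y
    rw [← Multiset.mem_coe, hLfullval k, ← Finset.mem_def, Finset.mem_range]
  have hprefix : ∀ k k', k ≤ k' → Lfull k <+: Lfull k' := by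
    intro k k' hkk'
    induction k', hkk' using Nat.le_induction with
    | base => exact List.prefix_refl _
    | succ j hj ih => exact ih.trans ⟨L j, (hLfsucc j).symm⟩
  -- the rearrangement
  set p : ℕ → ℕ := fun m => (Lfull (m + 1)).getD m 0 with hp
  have hpK : ∀ K m, m < d K → p m = (Lfull K).getD m 0 := by
    intro K m hm
    have h1 : m < (Lfull (m + 1)).length := by
      rw [hlen (m + 1)]; exact lt_of_lt_of_le (Nat.lt_succ_self m) (hdk (m + 1))
    have h2 : m < (Lfull K).length := by rw [hlen K]; exact hm
    show (Lfull (m + 1)).getD m 0 = (Lfull K).getD m 0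
    rcases le_total (m + 1) K with hle | hle
    · have := (hprefix _ _ hle).getElem h1
      rw [List.getD_eq_getElem _ _ h1, List.getD_eq_getElem _ _ h2, this]
    · have := (hprefix _ _ hle).getElem h2
      rw [List.getD_eq_getElem _ _ h1, List.getD_eq_getElem _ _ h2, this]
  have hpbij : Function.Bijective p := by
    constructor
    · intro a b hab
      have ha : a < d (max a b + 1) :=
        lt_of_lt_of_le (Nat.lt_succ_of_le (le_max_left a b)) (hdk _)
      have hb : b < d (max a b + 1) :=
        lt_of_lt_of_le (Nat.lt_succ_of_le (le_max_right a b)) (hdk _)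
      rw [hpK (max a b + 1) a ha, hpK (max a b + 1) b hb] at hab
      have ha' : a < (Lfull (max a b + 1)).length := by rw [hlen (max a b + 1)]; exact ha
      have hb' : b < (Lfull (max a b + 1)).length := by rw [hlen (max a b + 1)]; exact hb
      rw [List.getD_eq_getElem _ _ ha', List.getD_eq_getElem _ _ hb'] at hab
      exact ((hnodup (max a b + 1)).getElem_inj_iff).mp hab
    · intro y
      have hy : y ∈ Lfull (y + 1) :=
        (hmem (y + 1) y).mpr (lt_of_lt_of_le (Nat.lt_succ_self y) (hdk (y + 1)))
      obtain ⟨i, hi, hiy⟩ := List.mem_iff_getElem.mp hy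
      refine ⟨i, ?_⟩
      have hi' : i < d (y + 1) := by rw [← hlen (y + 1)]; exact hi
      rw [hpK (y + 1) i hi', List.getD_eq_getElem _ _ hi, hiy]
  obtain ⟨Mp, hMp⟩ := h p hpbij
  -- prefix sums of the rearrangement
  have hsum : ∀ K ℓ, ℓ ≤ d K →
      ∑ i ∈ Finset.range ℓ, x (p i) = (((Lfull K).map x).take ℓ).sum := by
    intro K ℓ hℓ
    induction ℓ with
    | zero => simp
    | succ m ih =>
      have hmK : m < d K := hℓ
      have hmlen : m < (Lfull K).length := by rw [hlen K]; exact hmK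
      have hmlen' : m < ((Lfull K).map x).length := by
        rw [List.length_map, hlen K]; exact hmK
      rw [Finset.sum_range_succ, ih (Nat.le_of_succ_le hℓ),
        List.sum_take_succ _ _ hmlen']
      congr 1
      rw [hpK K m hmK, List.getD_eq_getElem _ _ hmlen, List.getElem_map]
  have hlistfull : ∀ k, ((Lfull k).map x).sum = ∑ j ∈ Finset.range (d k), x j :=
    fun k => list_sum_eq_finset_sum x _ _ (hLfullval k)
  have hsum_dk : ∀ k,
      ∑ i ∈ Finset.range (d k), x (p i) = ∑ j ∈ Finset.range (d k), x j := by
    intro k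
    rw [hsum k (d k) le_rfl, List.take_of_length_le (by rw [List.length_map, hlen k]),
      hlistfull k]
  have hsum_mid : ∀ k,
      ∑ i ∈ Finset.range (d k + (B k \ F k).card), x (p i)
        = (∑ j ∈ Finset.range (d k), x j) + ∑ j ∈ B k \ F k, x j := by
    intro k
    have hcard : (B k \ F k).card ≤ (B k).card :=
      Finset.card_le_card Finset.sdiff_subset
    have hBcard : (B k).card = d (k + 1) - d k := by
      show (Finset.range (d (k + 1)) \ Finset.range (d k)).card = _
      rw [Finset.card_sdiff_of_subset (Finset.range_subset_range.mpr (hdlt k).le),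
        Finset.card_range, Finset.card_range]
    have hdd := hdlt k
    have hle : d k + (B k \ F k).card ≤ d (k + 1) := by omega
    rw [hsum (k + 1) _ hle, hLfsucc k, List.map_append]
    have hl1 : ((Lfull k).map x).length = d k := by rw [List.length_map, hlen k]
    rw [← hl1, List.take_length_add_append, List.sum_append, hl1, hlistfull k]
    congr 1
    have hlBF : (((B k \ F k).sort (· ≤ ·)).map x).length = (B k \ F k).card := by
      rw [List.length_map, Finset.length_sort]
    show (((((B k \ F k).sort (· ≤ ·)) ++ ((F k).sort (· ≤ ·))).map x).take
      ((B k \ F k).card)).sum = _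
    rw [List.map_append, ← hlBF, List.take_left]
    exact list_sum_eq_finset_sum x _ _ (Finset.sort_eq _ _)
  -- the contradiction
  obtain ⟨k, hk⟩ := exists_nat_gt (4 * M0 + 2 * Mp)
  have e1 : ∑ j ∈ B k, x j
      = ∑ j ∈ Finset.range (d (k + 1)), x j - ∑ j ∈ Finset.range (d k), x j := by
    rw [eq_sub_iff_add_eq]
    exact Finset.sum_sdiff (Finset.range_subset_range.mpr (hdlt k).le)
  have e2 : ∑ j ∈ B k \ F k, x j
      = (∑ i ∈ Finset.range (d k + (B k \ F k).card), x (p i))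
        - ∑ j ∈ Finset.range (d k), x j := by
    rw [hsum_mid k]; abel
  have e3 : ∑ j ∈ F k, x j = ∑ j ∈ B k, x j - ∑ j ∈ B k \ F k, x j := by
    rw [eq_sub_iff_add_eq, add_comm]
    exact Finset.sum_sdiff (hFB k)
  have e4 : ∑ j ∈ F k, x j = A (n (k + 1)) - A (n k) := by
    show ∑ j ∈ (Finset.range (n (k + 1)) \ Finset.range (n k)).image s, x j = _
    rw [Finset.sum_image (fun a _ b _ hab => hs.injective hab),
      eq_sub_iff_add_eq]
    show (∑ i ∈ Finset.range (n (k + 1)) \ Finset.range (n k), x (s i))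
      + ∑ i ∈ Finset.range (n k), x (s i) = ∑ i ∈ Finset.range (n (k + 1)), x (s i)
    exact Finset.sum_sdiff (Finset.range_subset_range.mpr (hnlt k).le)
  have hdiff : ‖A (n (k + 1)) - A (n k)‖ ≤ 4 * M0 + 2 * Mp := by
    rw [← e4, e3, e1, e2]
    have h1 := hM0 (d (k + 1))
    have h2 := hM0 (d k)
    have h3 := hMp (d k + (B k \ F k).card)
    have h4 : ‖∑ i ∈ Finset.range (d k), x (p i)‖ ≤ Mp := hMp (d k)
    calc ‖(∑ j ∈ Finset.range (d (k + 1)), x j - ∑ j ∈ Finset.range (d k), x j)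
          - ((∑ i ∈ Finset.range (d k + (B k \ F k).card), x (p i))
            - ∑ j ∈ Finset.range (d k), x j)‖
        ≤ ‖∑ j ∈ Finset.range (d (k + 1)), x j - ∑ j ∈ Finset.range (d k), x j‖
          + ‖(∑ i ∈ Finset.range (d k + (B k \ F k).card), x (p i))
            - ∑ j ∈ Finset.range (d k), x j‖ := norm_sub_le _ _
      _ ≤ (‖∑ j ∈ Finset.range (d (k + 1)), x j‖ + ‖∑ j ∈ Finset.range (d k), x j‖)
          + (‖∑ i ∈ Finset.range (d k + (B k \ F k).card), x (p i)‖
            + ‖∑ j ∈ Finset.range (d k), x j‖) :=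
          add_le_add (norm_sub_le _ _) (norm_sub_le _ _)
      _ ≤ (M0 + M0) + (Mp + M0) := by
          refine add_le_add (add_le_add h1 h2) (add_le_add h3 h2)
      _ ≤ 4 * M0 + 2 * Mp := by
          have h0 : (0:ℝ) ≤ M0 := le_trans (norm_nonneg _) (hM0 0)
          have h0' : (0:ℝ) ≤ Mp := le_trans (norm_nonneg _) (hMp 0)
          linarith
  have hlow : (k : ℝ) + 1 < ‖A (n (k + 1))‖ - ‖A (n k)‖ := by
    have := hnA k; linarith
  have := (norm_sub_norm_le _ _).trans hdiff
  have : (k : ℝ) + 1 < 4 * M0 + 2 * Mp := by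
    calc (k : ℝ) + 1 < ‖A (n (k + 1))‖ - ‖A (n k)‖ := hlow
      _ ≤ ‖A (n (k + 1)) - A (n k)‖ := norm_sub_norm_le _ _
      _ ≤ 4 * M0 + 2 * Mp := hdiff
  linarith
end

section
/- Let X be a normed space and (x_n) a sequence in X. The following are equivalent: (1) every subseries of ∑ x_n has bounded partial sums; (2) there is a uniform bound M' > 0 on the norms of all partial sums of all subseries; (3) ∑ x_n is uniformly unconditionally bounded; (4) every rearrangement of ∑ x_n has bounded partial sums. -/
open Finset

namespace UUBaux

/-- cumulative lengths -/
def cFun (L : ℕ → List ℕ) (k : ℕ) : ℕ := ∑ j ∈ Finset.range k, (L j).length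

/-- block index of position n -/
def blkFun (L : ℕ → List ℕ) (n : ℕ) : ℕ := Nat.findGreatest (fun k => cFun L k ≤ n) n

/-- concatenation function -/
def fFun (L : ℕ → List ℕ) (n : ℕ) : ℕ :=
  (L (blkFun L n)).getD (n - cFun L (blkFun L n)) 0

variable {L : ℕ → List ℕ} (hpos : ∀ k, 0 < (L k).length)

theorem cFun_zero : cFun L 0 = 0 := rfl

theorem cFun_succ (k : ℕ) : cFun L (k + 1) = cFun L k + (L k).length :=
  Finset.sum_range_succ _ _

include hpos

theorem cFun_lt_succ (k : ℕ) : cFun L k < cFun L (k + 1) := by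
  rw [cFun_succ]; exact Nat.lt_add_of_pos_right (hpos k)

theorem cFun_strictMono : StrictMono (cFun L) :=
  strictMono_nat_of_lt_succ (cFun_lt_succ hpos)

theorem le_cFun (k : ℕ) : k ≤ cFun L k := by
  induction k with
  | zero => simp [cFun_zero]
  | succ k ih => exact Nat.succ_le_of_lt (lt_of_le_of_lt ih (cFun_lt_succ hpos k))

omit hpos in
theorem cFun_blk_le (n : ℕ) : cFun L (blkFun L n) ≤ n :=
  Nat.findGreatest_spec (P := fun k => cFun L k ≤ n) (Nat.zero_le n) (by simp [cFun_zero])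

theorem lt_cFun_blk_succ (n : ℕ) : n < cFun L (blkFun L n + 1) := by
  by_contra h
  push_neg at h
  have h1 : blkFun L n + 1 ≤ n := le_trans (le_cFun hpos _) h
  exact absurd h (Nat.findGreatest_is_greatest (P := fun k => cFun L k ≤ n)
    (Nat.lt_succ_self _) h1)

theorem blk_eq {k n : ℕ} (h1 : cFun L k ≤ n) (h2 : n < cFun L (k + 1)) :
    blkFun L n = k := by
  rcases lt_trichotomy (blkFun L n) k with h | h | h
  · exact absurd (lt_of_lt_of_le (lt_cFun_blk_succ hpos n)
      ((cFun_strictMono hpos).monotone h)) (not_lt.2 h1)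
  · exact h
  · exact absurd (lt_of_lt_of_le h2 ((cFun_strictMono hpos).monotone h)) (not_lt.2 (cFun_blk_le n))

theorem fFun_eq {k n : ℕ} (h1 : cFun L k ≤ n) (h2 : n < cFun L (k + 1)) :
    fFun L n = (L k).getD (n - cFun L k) 0 := by
  rw [fFun, blk_eq hpos h1 h2]


theorem fFun_mem {k n : ℕ} (h1 : cFun L k ≤ n) (h2 : n < cFun L (k + 1)) :
    fFun L n ∈ L k := by
  rw [fFun_eq hpos h1 h2]
  have hlt : n - cFun L k < (L k).length := by
    rw [cFun_succ] at h2; omega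
  rw [List.getD_eq_getElem _ _ hlt]
  exact List.getElem_mem hlt

theorem fFun_inj_block {k a b : ℕ} (hnd : (L k).Nodup)
    (ha1 : cFun L k ≤ a) (ha2 : a < cFun L (k + 1))
    (hb1 : cFun L k ≤ b) (hb2 : b < cFun L (k + 1))
    (h : fFun L a = fFun L b) : a = b := by
  rw [fFun_eq hpos ha1 ha2, fFun_eq hpos hb1 hb2] at h
  have hla : a - cFun L k < (L k).length := by rw [cFun_succ] at ha2; omega
  have hlb : b - cFun L k < (L k).length := by rw [cFun_succ] at hb2; omega
  rw [List.getD_eq_getElem _ _ hla, List.getD_eq_getElem _ _ hlb] at h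
  have := (List.Nodup.getElem_inj_iff hnd (hi := hla) (hj := hlb)).1 h
  omega

variable {X : Type*} [AddCommMonoid X]

omit hpos in
theorem list_sum (x : ℕ → X) (l : List ℕ) :
    ∑ j ∈ Finset.range l.length, x (l.getD j 0) = (l.map x).sum := by
  induction l with
  | nil => simp
  | cons a l ih =>
    rw [List.length_cons, Finset.sum_range_succ']
    simp only [List.getD_cons_succ, List.getD_cons_zero, List.map_cons, List.sum_cons, ih]
    exact add_comm _ _

omit hpos in
theorem sort_sum (x : ℕ → X) (s : Finset ℕ) :
    ((s.sort (· ≤ ·)).map x).sum = ∑ a ∈ s, x a := by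
  rw [← Finset.sum_map_toList]
  exact ((Finset.sort_perm_toList s (· ≤ ·)).map x).sum_eq

theorem sum_block (x : ℕ → X) {k t : ℕ} (ht : t ≤ (L k).length) :
    ∑ i ∈ Finset.Ico (cFun L k) (cFun L k + t), x (fFun L i)
      = ∑ j ∈ Finset.range t, x ((L k).getD j 0) := by
  rw [Finset.sum_Ico_eq_sum_range]
  simp only [Nat.add_sub_cancel_left]
  refine Finset.sum_congr rfl fun j hj => ?_
  rw [Finset.mem_range] at hj
  rw [fFun_eq hpos (Nat.le_add_right _ _) (by rw [cFun_succ]; omega), Nat.add_sub_cancel_left]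

omit hpos in
theorem sum_range_sub_sum_range (x : ℕ → X) {a b : ℕ} (h : a ≤ b) :
    ∑ i ∈ Finset.range b, x i = (∑ i ∈ Finset.range a, x i) + ∑ i ∈ Finset.Ico a b, x i := by
  rw [Finset.range_eq_Ico, Finset.range_eq_Ico]
  exact (Finset.sum_Ico_consecutive x (Nat.zero_le a) h).symm


end UUBaux

namespace UUBaux

variable {X : Type*} [NormedAddCommGroup X] {x : ℕ → X}

theorem exists_big (hQ : ∀ M : ℝ, 0 < M → ∃ F : Finset ℕ, M < ‖∑ i ∈ F, x i‖)
    (m : ℕ) (c : ℝ) :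
    ∃ F : Finset ℕ, (∀ a ∈ F, m < a) ∧ c < ‖∑ i ∈ F, x i‖ := by
  set B : ℝ := ∑ i ∈ Finset.range (m + 1), ‖x i‖ with hB
  have hB0 : 0 ≤ B := Finset.sum_nonneg fun i _ => norm_nonneg _
  obtain ⟨F₀, hF₀⟩ := hQ (max (c + B) 1) (lt_of_lt_of_le one_pos (le_max_right _ _))
  refine ⟨F₀.filter (fun a => m < a), fun a ha => (Finset.mem_filter.1 ha).2, ?_⟩
  have hsplit := Finset.sum_filter_add_sum_filter_not F₀ (fun a => m < a) x
  have hsub : F₀.filter (fun a => ¬ m < a) ⊆ Finset.range (m + 1) := by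
    intro a ha
    rw [Finset.mem_range]
    have := (Finset.mem_filter.1 ha).2
    omega
  have hsmall : ‖∑ i ∈ F₀.filter (fun a => ¬ m < a), x i‖ ≤ B := by
    refine le_trans (norm_sum_le _ _) ?_
    exact Finset.sum_le_sum_of_subset_of_nonneg hsub fun i _ _ => norm_nonneg _
  have h1 : ‖∑ i ∈ F₀, x i‖ ≤ ‖∑ i ∈ F₀.filter (fun a => m < a), x i‖ + B := by
    calc ‖∑ i ∈ F₀, x i‖
        = ‖∑ i ∈ F₀.filter (fun a => m < a), x i
            + ∑ i ∈ F₀.filter (fun a => ¬ m < a), x i‖ := by rw [hsplit]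
      _ ≤ ‖∑ i ∈ F₀.filter (fun a => m < a), x i‖
            + ‖∑ i ∈ F₀.filter (fun a => ¬ m < a), x i‖ := norm_add_le _ _
      _ ≤ _ := by linarith
  have := le_max_left (c + B) 1
  linarith

theorem exists_blocks (hQ : ∀ M : ℝ, 0 < M → ∃ F : Finset ℕ, M < ‖∑ i ∈ F, x i‖) :
    ∃ G : ℕ → Finset ℕ, (∀ k, (G k).Nonempty)
      ∧ (∀ k, ∀ b ∈ G (k + 1), (G k).sup id < b)
      ∧ (∀ k : ℕ, (k : ℝ) < ‖∑ i ∈ G k, x i‖) := by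
  have big := exists_big hQ
  set G : ℕ → Finset ℕ := fun k => Nat.rec (big 0 0).choose
    (fun k ih => (big (ih.sup id) ((k : ℝ) + 1)).choose) k with hG
  have hG0 : G 0 = (big 0 0).choose := rfl
  have hGsucc : ∀ k : ℕ, G (k + 1) = (big ((G k).sup id) ((k : ℝ) + 1)).choose := by
    intro k; rfl
  have hnorm : ∀ k : ℕ, (k : ℝ) < ‖∑ i ∈ G k, x i‖ := by
    intro k
    cases k with
    | zero =>
      rw [hG0]
      simpa using (big 0 0).choose_spec.2
    | succ k =>
      rw [hGsucc]
      push_cast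
      exact (big ((G k).sup id) ((k : ℝ) + 1)).choose_spec.2
  refine ⟨G, ?_, fun k b hb => ?_, hnorm⟩
  case refine_2 =>
    rw [hGsucc] at hb
    exact (big ((G k).sup id) ((k : ℝ) + 1)).choose_spec.1 b hb
  intro k
  rw [Finset.nonempty_iff_ne_empty]
  intro he
  have := hnorm k
  rw [he] at this
  simp at this
  exact absurd this (not_lt.2 k.cast_nonneg)

theorem key_subseries (hQ : ∀ M : ℝ, 0 < M → ∃ F : Finset ℕ, M < ‖∑ i ∈ F, x i‖) :
    ∃ s : ℕ → ℕ, StrictMono s ∧ ∀ M : ℝ, ∃ n, M < ‖∑ i ∈ Finset.range n, x (s i)‖ := by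
  obtain ⟨G, hne, hsep, hnorm⟩ := exists_blocks hQ
  set L : ℕ → List ℕ := fun k => (G k).sort (· ≤ ·) with hL
  have hpos : ∀ k, 0 < (L k).length := fun k => by
    rw [hL]; simpa [Finset.length_sort] using (hne k).card_pos
  set s := fFun L with hs
  have hlen : ∀ k, (L k).length = (G k).card := fun k => Finset.length_sort _
  have hblocksum : ∀ k, ∑ i ∈ Finset.Ico (cFun L k) (cFun L (k + 1)), x (s i)
      = ∑ a ∈ G k, x a := by
    intro k
    rw [cFun_succ, hlen, sum_block hpos x (le_of_eq (hlen k).symm), ← hlen k,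
      list_sum x (L k)]
    exact sort_sum x (G k)
  refine ⟨s, ?_, ?_⟩
  · apply strictMono_nat_of_lt_succ
    intro n
    have h1 : cFun L (blkFun L n) ≤ n := cFun_blk_le n
    have h2 : n < cFun L (blkFun L n + 1) := lt_cFun_blk_succ hpos n
    set k := blkFun L n with hk
    by_cases hcase : n + 1 < cFun L (k + 1)
    · have e1 : s n = (L k).getD (n - cFun L k) 0 := fFun_eq hpos h1 h2
      have e2 : s (n + 1) = (L k).getD (n + 1 - cFun L k) 0 :=
        fFun_eq hpos (by omega) hcase
      have hi : n + 1 - cFun L k < (L k).length := by rw [cFun_succ] at hcase; omega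
      have hi' : n - cFun L k < (L k).length := by omega
      rw [e1, e2, List.getD_eq_getElem _ _ hi', List.getD_eq_getElem _ _ hi]
      have hsort : (L k).SortedLT := Finset.sortedLT_sort _
      have := hsort.strictMono_get
        (show (⟨n - cFun L k, hi'⟩ : Fin (L k).length) < ⟨n + 1 - cFun L k, hi⟩ by
          rw [Fin.lt_def]; simp; omega)
      simpa [List.get_eq_getElem] using this
    · have hn1 : n + 1 = cFun L (k + 1) := by omega
      have hm1 : s n ∈ G k := (Finset.mem_sort _).1 (fFun_mem hpos h1 h2)
      have hm2 : s (n + 1) ∈ G (k + 1) := by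
        refine (Finset.mem_sort _).1 (fFun_mem hpos (k := k + 1) (by omega) ?_)
        rw [← hn1] at *
        calc n + 1 < cFun L (k + 1) + (L (k + 1)).length := by
              have := hpos (k + 1); omega
          _ = cFun L (k + 2) := (cFun_succ _).symm
      exact lt_of_le_of_lt (Finset.le_sup (f := id) hm1) (hsep k _ hm2)
  · intro M
    by_contra hcon
    push_neg at hcon
    obtain ⟨k, hk⟩ := exists_nat_gt (2 * M)
    have hle : cFun L k ≤ cFun L (k + 1) := (cFun_lt_succ hpos k).le
    have heq : ∑ a ∈ G k, x a
        = (∑ i ∈ Finset.range (cFun L (k + 1)), x (s i))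
          - ∑ i ∈ Finset.range (cFun L k), x (s i) := by
      have h' := sum_range_sub_sum_range (fun i => x (s i)) hle
      rw [hblocksum k] at h'
      rw [h']
      abel
    have h1 := hnorm k
    have h2 := norm_sub_le (∑ i ∈ Finset.range (cFun L (k + 1)), x (s i))
      (∑ i ∈ Finset.range (cFun L k), x (s i))
    rw [← heq] at h2
    have h3 := hcon (cFun L (k + 1))
    have h4 := hcon (cFun L k)
    linarith

theorem key_rearr (hQ : ∀ M : ℝ, 0 < M → ∃ F : Finset ℕ, M < ‖∑ i ∈ F, x i‖) :
    ∃ p : ℕ → ℕ, Function.Bijective p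
      ∧ ∀ M : ℝ, ∃ n, M < ‖∑ i ∈ Finset.range n, x (p i)‖ := by
  obtain ⟨G, hne, hsep, hnorm⟩ := exists_blocks hQ
  set N : ℕ → ℕ := fun k => Nat.rec 0 (fun k _ => (G k).sup id + 1) k with hN
  have hN0 : N 0 = 0 := rfl
  have hNsucc : ∀ k, N (k + 1) = (G k).sup id + 1 := fun _ => rfl
  have hGsub : ∀ k, G k ⊆ Finset.Ico (N k) (N (k + 1)) := by
    intro k a ha
    rw [Finset.mem_Ico, hNsucc]
    refine ⟨?_, Nat.lt_succ_of_le (Finset.le_sup (f := id) ha)⟩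
    cases k with
    | zero => simp [hN0]
    | succ k =>
      rw [hNsucc]
      exact hsep k a ha
  have hNlt : ∀ k, N k < N (k + 1) := by
    intro k
    obtain ⟨a, ha⟩ := hne k
    have h1 := Finset.mem_Ico.1 (hGsub k ha)
    omega
  set L : ℕ → List ℕ := fun k =>
    (G k).sort (· ≤ ·) ++ ((Finset.Ico (N k) (N (k + 1))) \ G k).sort (· ≤ ·) with hL
  have hlen : ∀ k, (L k).length = N (k + 1) - N k := by
    intro k
    have hcard := Finset.card_le_card (hGsub k)
    rw [Nat.card_Ico] at hcard
    rw [hL]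
    simp only [List.length_append, Finset.length_sort,
      Finset.card_sdiff_of_subset (hGsub k), Nat.card_Ico]
    omega
  have hpos : ∀ k, 0 < (L k).length := fun k => by
    rw [hlen]; have := hNlt k; omega
  have hc : ∀ k, cFun L k = N k := by
    intro k
    induction k with
    | zero => rfl
    | succ k ih =>
      rw [cFun_succ, ih, hlen]
      have := hNlt k; omega
  have hmemL : ∀ k a, a ∈ L k ↔ a ∈ Finset.Ico (N k) (N (k + 1)) := by
    intro k a
    rw [hL]
    simp only [List.mem_append, Finset.mem_sort, Finset.mem_sdiff]
    constructor
    · rintro (h | h)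
      · exact hGsub k h
      · exact h.1
    · intro h
      by_cases hg : a ∈ G k
      · exact Or.inl hg
      · exact Or.inr ⟨h, hg⟩
  have hnd : ∀ k, (L k).Nodup := by
    intro k
    rw [hL]
    refine List.Nodup.append (Finset.sort_nodup _ _) (Finset.sort_nodup _ _) ?_
    intro a ha hb
    exact (Finset.mem_sdiff.1 ((Finset.mem_sort _).1 hb)).2 ((Finset.mem_sort _).1 ha)
  set p := fFun L with hp
  have hpmem : ∀ {k n : ℕ}, cFun L k ≤ n → n < cFun L (k + 1)
      → p n ∈ Finset.Ico (N k) (N (k + 1)) :=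
    fun h1 h2 => (hmemL _ _).1 (fFun_mem hpos h1 h2)
  have hNmono : Monotone N := by
    intro a b hab
    rw [← hc, ← hc]
    exact (cFun_strictMono hpos).monotone hab
  refine ⟨p, ⟨?_, ?_⟩, ?_⟩
  · -- injective
    intro a b hab
    have ha1 : cFun L (blkFun L a) ≤ a := cFun_blk_le a
    have ha2 : a < cFun L (blkFun L a + 1) := lt_cFun_blk_succ hpos a
    have hb1 : cFun L (blkFun L b) ≤ b := cFun_blk_le b
    have hb2 : b < cFun L (blkFun L b + 1) := lt_cFun_blk_succ hpos b
    have hma := Finset.mem_Ico.1 (hpmem ha1 ha2)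
    have hmb := Finset.mem_Ico.1 (hpmem hb1 hb2)
    have hkk : blkFun L a = blkFun L b := by
      by_contra hne'
      rcases lt_or_gt_of_ne hne' with h | h
      · have hlt : p a < p b :=
          lt_of_lt_of_le hma.2 (le_trans (hNmono h) hmb.1)
        rw [hab] at hlt
        exact lt_irrefl _ hlt
      · have hlt : p b < p a :=
          lt_of_lt_of_le hmb.2 (le_trans (hNmono h) hma.1)
        rw [hab] at hlt
        exact lt_irrefl _ hlt
    rw [hkk] at ha1 ha2
    exact fFun_inj_block hpos (hnd (blkFun L b)) ha1 ha2 hb1 hb2 hab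
  · -- surjective
    intro m
    have h1 : cFun L (blkFun L m) ≤ m := cFun_blk_le m
    have h2 : m < cFun L (blkFun L m + 1) := lt_cFun_blk_succ hpos m
    have hm : m ∈ L (blkFun L m) := by
      rw [hmemL, Finset.mem_Ico, ← hc (blkFun L m), ← hc (blkFun L m + 1)]
      exact ⟨h1, h2⟩
    obtain ⟨j, hj, hjm⟩ := List.mem_iff_getElem.1 hm
    refine ⟨cFun L (blkFun L m) + j, ?_⟩
    have hlt : cFun L (blkFun L m) + j < cFun L (blkFun L m + 1) := by
      rw [cFun_succ]; omega
    rw [hp, fFun_eq hpos (Nat.le_add_right _ _) hlt, Nat.add_sub_cancel_left,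
      List.getD_eq_getElem _ _ hj, hjm]
  · -- unbounded
    intro M
    by_contra hcon
    push_neg at hcon
    obtain ⟨k, hk⟩ := exists_nat_gt (2 * M)
    have hcard : (G k).card ≤ (L k).length := by
      rw [hL]
      simp only [List.length_append, Finset.length_sort]
      omega
    have hbs : ∑ i ∈ Finset.Ico (cFun L k) (cFun L k + (G k).card), x (p i)
        = ∑ a ∈ G k, x a := by
      rw [sum_block hpos x hcard]
      have hre : ∀ j ∈ Finset.range (G k).card,
          x ((L k).getD j 0) = x (((G k).sort (· ≤ ·)).getD j 0) := by
        intro j hj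
        rw [Finset.mem_range] at hj
        rw [hL]
        rw [List.getD_append _ _ _ _ (by rw [Finset.length_sort]; exact hj)]
      rw [Finset.sum_congr rfl hre, ← Finset.length_sort (α := ℕ) (· ≤ ·) (s := G k),
        list_sum x ((G k).sort (· ≤ ·))]
      exact sort_sum x (G k)
    have hle2 : cFun L k ≤ cFun L k + (G k).card := Nat.le_add_right _ _
    have h' := sum_range_sub_sum_range (fun i => x (p i)) hle2
    rw [hbs] at h'
    have heq : ∑ a ∈ G k, x a
        = (∑ i ∈ Finset.range (cFun L k + (G k).card), x (p i))
          - ∑ i ∈ Finset.range (cFun L k), x (p i) := by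
      rw [h']; abel
    have h1 := hnorm k
    have h2 := norm_sub_le (∑ i ∈ Finset.range (cFun L k + (G k).card), x (p i))
      (∑ i ∈ Finset.range (cFun L k), x (p i))
    rw [← heq] at h2
    have h3 := hcon (cFun L k + (G k).card)
    have h4 := hcon (cFun L k)
    linarith

end UUBaux

theorem uub_tfae
    {X : Type*} [NormedAddCommGroup X] [NormedSpace ℝ X] (x : ℕ → X) :
    List.TFAE
      [ ∀ s : ℕ → ℕ, StrictMono s →
          ∃ M : ℝ, ∀ n : ℕ, ‖∑ i ∈ Finset.range n, x (s i)‖ ≤ M,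
        ∃ M' > (0 : ℝ), ∀ s : ℕ → ℕ, StrictMono s →
          ∀ n : ℕ, ‖∑ i ∈ Finset.range n, x (s i)‖ ≤ M',
        ∃ M > (0 : ℝ), ∀ p : ℕ → ℕ, Function.Bijective p →
          ∀ n : ℕ, ‖∑ i ∈ Finset.range n, x (p i)‖ ≤ M,
        ∀ p : ℕ → ℕ, Function.Bijective p →
          ∃ M : ℝ, ∀ n : ℕ, ‖∑ i ∈ Finset.range n, x (p i)‖ ≤ M ] := by
  have hQn : ¬(∃ M : ℝ, 0 < M ∧ ∀ F : Finset ℕ, ‖∑ i ∈ F, x i‖ ≤ M)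
      → ∀ M : ℝ, 0 < M → ∃ F : Finset ℕ, M < ‖∑ i ∈ F, x i‖ := by
    intro h M hM
    push_neg at h
    exact h M hM
  have h1Q : (∀ s : ℕ → ℕ, StrictMono s →
        ∃ M : ℝ, ∀ n : ℕ, ‖∑ i ∈ Finset.range n, x (s i)‖ ≤ M)
      → ∃ M : ℝ, 0 < M ∧ ∀ F : Finset ℕ, ‖∑ i ∈ F, x i‖ ≤ M := by
    intro h1
    by_contra hq
    obtain ⟨s, hsm, hub⟩ := UUBaux.key_subseries (hQn hq)
    obtain ⟨M, hM⟩ := h1 s hsm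
    obtain ⟨n, hn⟩ := hub M
    exact absurd (hM n) (not_le.2 hn)
  have h4Q : (∀ p : ℕ → ℕ, Function.Bijective p →
        ∃ M : ℝ, ∀ n : ℕ, ‖∑ i ∈ Finset.range n, x (p i)‖ ≤ M)
      → ∃ M : ℝ, 0 < M ∧ ∀ F : Finset ℕ, ‖∑ i ∈ F, x i‖ ≤ M := by
    intro h4
    by_contra hq
    obtain ⟨p, hpb, hub⟩ := UUBaux.key_rearr (hQn hq)
    obtain ⟨M, hM⟩ := h4 p hpb
    obtain ⟨n, hn⟩ := hub M
    exact absurd (hM n) (not_le.2 hn)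
  have hQ2 : (∃ M : ℝ, 0 < M ∧ ∀ F : Finset ℕ, ‖∑ i ∈ F, x i‖ ≤ M)
      → ∃ M' > (0 : ℝ), ∀ s : ℕ → ℕ, StrictMono s →
        ∀ n : ℕ, ‖∑ i ∈ Finset.range n, x (s i)‖ ≤ M' := by
    rintro ⟨M, hM0, hM⟩
    refine ⟨M, hM0, fun s hs n => ?_⟩
    have he := Finset.sum_image (s := Finset.range n) (f := x) (g := s)
      (fun a _ b _ hab => hs.injective hab)
    rw [← he]
    exact hM _
  have hQ3 : (∃ M : ℝ, 0 < M ∧ ∀ F : Finset ℕ, ‖∑ i ∈ F, x i‖ ≤ M)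
      → ∃ M > (0 : ℝ), ∀ p : ℕ → ℕ, Function.Bijective p →
        ∀ n : ℕ, ‖∑ i ∈ Finset.range n, x (p i)‖ ≤ M := by
    rintro ⟨M, hM0, hM⟩
    refine ⟨M, hM0, fun p hp n => ?_⟩
    have he := Finset.sum_image (s := Finset.range n) (f := x) (g := p)
      (fun a _ b _ hab => hp.injective hab)
    rw [← he]
    exact hM _
  tfae_have 1 → 2 := fun h1 => hQ2 (h1Q h1)
  tfae_have 2 → 3 := by
    rintro ⟨M', _, h⟩
    exact hQ3 (h1Q (fun s hs => ⟨M', h s hs⟩))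
  tfae_have 3 → 4 := by
    rintro ⟨M, _, h⟩ p hp
    exact ⟨M, h p hp⟩
  tfae_have 4 → 1 := by
    intro h4
    obtain ⟨M', _, h⟩ := hQ2 (h4Q h4)
    exact fun s hs => ⟨M', h s hs⟩
  tfae_finish
end

section
/- Let X be a normed space and (x_n) a sequence in X. Suppose there exists a strictly increasing s' : ℕ → ℕ such that the partial sums of ∑ x_{s'(n)} are unbounded. Then for each m ∈ ℕ, the set A_m = {s ∈ S : ‖∑_{i=1}^n x_{s(i)}‖ ≤ m for all n} has empty interior in S, and hence is nowhere dense. -/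
/-- `S`, the Polish space of strictly increasing functions `ℕ → ℕ`,
as a subspace of the product space `ℕ → ℕ`. -/

abbrev IncSeq : Type := {s : ℕ → ℕ // StrictMono s}

open Topology in
theorem Am_nowhere_dense
    {X : Type*} [NormedAddCommGroup X] [NormedSpace ℝ X] (x : ℕ → X)
    (s' : ℕ → ℕ) (hs' : StrictMono s')
    (hub : ¬ ∃ M : ℝ, ∀ n : ℕ, ‖∑ i ∈ Finset.range n, x (s' i)‖ ≤ M)
    (m : ℕ) :
    interior {s : IncSeq | ∀ n : ℕ, ‖∑ i ∈ Finset.range n, x (s.1 i)‖ ≤ (m : ℝ)} = ∅ ∧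
    IsNowhereDense {s : IncSeq | ∀ n : ℕ, ‖∑ i ∈ Finset.range n, x (s.1 i)‖ ≤ (m : ℝ)} := by
  set P : ℕ → X := fun n => ∑ i ∈ Finset.range n, x (s' i) with hPdef
  set A : Set IncSeq :=
    {s : IncSeq | ∀ n : ℕ, ‖∑ i ∈ Finset.range n, x (s.1 i)‖ ≤ (m : ℝ)} with hAdef
  push_neg at hub
  have hint : interior A = ∅ := by
    rw [Set.eq_empty_iff_forall_notMem]
    intro s hs
    have hAnhds : A ∈ 𝓝 s := mem_interior_iff_mem_nhds.1 hs
    rw [nhds_induced] at hAnhds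
    obtain ⟨U, hU, hUA⟩ := hAnhds
    rw [nhds_pi] at hU
    obtain ⟨I, hIfin, V, hV, hIV⟩ := Filter.mem_pi.1 hU
    obtain ⟨B, hB⟩ := hIfin.bddAbove
    set N : ℕ := B + 1 with hN
    set K : ℕ := s.1 N + 1 with hK
    set t : ℕ → ℕ := fun i => if i < N then s.1 i else s' (i - N + K) with ht
    have htmono : StrictMono t := by
      apply strictMono_nat_of_lt_succ
      intro i
      by_cases h1 : i + 1 < N
      · simp only [ht, if_pos h1, if_pos (by omega : i < N)]
        exact s.2 (Nat.lt_succ_self i)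
      · by_cases h2 : i < N
        · simp only [ht, if_pos h2, if_neg h1]
          have h3 : s.1 i < s.1 N := s.2 h2
          have h4 : K ≤ s' (i + 1 - N + K) :=
            le_trans (Nat.le_add_left K _) (hs'.le_apply)
          omega
        · simp only [ht, if_neg h2, if_neg h1]
          exact hs' (by omega)
    have htI : ∀ i ∈ I, t i = s.1 i := by
      intro i hi
      have : i < N := by have := hB hi; omega
      simp [ht, this]
    have htA : (⟨t, htmono⟩ : IncSeq) ∈ A := by
      apply hUA
      apply hIV
      intro i hi
      show t i ∈ V i  -- membership in pi
      have := hV i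
      rw [mem_nhds_discrete] at this
      simpa [htI i hi] using this
    -- now derive contradiction
    set head : X := ∑ i ∈ Finset.range N, x (s.1 i) with hhead
    set C : ℝ := ∑ n ∈ Finset.range K, ‖P n‖ with hC
    obtain ⟨n₀, hn₀⟩ := hub (C + ‖P K‖ + ‖head‖ + m)
    have hCnonneg : 0 ≤ C := Finset.sum_nonneg fun _ _ => norm_nonneg _
    have hn₀K : K ≤ n₀ := by
      by_contra h
      push_neg at h
      have : ‖P n₀‖ ≤ C :=
        Finset.single_le_sum (f := fun n => ‖P n‖) (fun _ _ => norm_nonneg _)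
          (Finset.mem_range.2 h)
      have h1 : (0:ℝ) ≤ ‖P K‖ := norm_nonneg _
      have h2 : (0:ℝ) ≤ ‖head‖ := norm_nonneg _
      have h3 : (0:ℝ) ≤ (m:ℝ) := Nat.cast_nonneg m
      linarith
    set k : ℕ := n₀ - K with hk
    have hsum : ∑ i ∈ Finset.range (N + k), x (t i) = head + (P n₀ - P K) := by
      rw [Finset.sum_range_add]
      have h1 : ∑ i ∈ Finset.range N, x (t i) = head := by
        apply Finset.sum_congr rfl
        intro i hi
        rw [Finset.mem_range] at hi
        simp [ht, hi]
      have h2 : ∑ i ∈ Finset.range k, x (t (N + i)) = P n₀ - P K := by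
        have hPsplit : P (K + k) = P K + ∑ i ∈ Finset.range k, x (s' (K + i)) := by
          simp only [hPdef]
          rw [Finset.sum_range_add]
        have hKk : K + k = n₀ := by omega
        rw [hKk] at hPsplit
        have : ∑ i ∈ Finset.range k, x (t (N + i))
            = ∑ i ∈ Finset.range k, x (s' (K + i)) := by
          apply Finset.sum_congr rfl
          intro i _
          have h3 : ¬ (N + i < N) := by omega
          have h4 : N + i - N + K = K + i := by omega
          simp [ht, h3, h4, Nat.add_comm]
        rw [this]
        rw [hPsplit]
        abel
      rw [h1, h2]
    have hbound := htA (N + k)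
    simp only [hAdef, Set.mem_setOf_eq] at hbound
    rw [hsum] at hbound
    have htri : ‖P n₀‖ ≤ ‖head + (P n₀ - P K)‖ + ‖head‖ + ‖P K‖ := by
      have : P n₀ = (head + (P n₀ - P K)) - head + P K := by abel
      calc ‖P n₀‖ = ‖(head + (P n₀ - P K)) - head + P K‖ := by rw [← this]
        _ ≤ ‖(head + (P n₀ - P K)) - head‖ + ‖P K‖ := norm_add_le _ _
        _ ≤ ‖head + (P n₀ - P K)‖ + ‖head‖ + ‖P K‖ := by
            have := norm_sub_le (head + (P n₀ - P K)) head
            linarith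
    linarith
  have hclosed : IsClosed A := by
    have : A = ⋂ n : ℕ, {s : IncSeq | ‖∑ i ∈ Finset.range n, x (s.1 i)‖ ≤ (m : ℝ)} := by
      ext s
      simp [hAdef, Set.mem_iInter]
    rw [this]
    refine isClosed_iInter fun n => isClosed_le ?_ continuous_const
    apply Continuous.norm
    apply continuous_finset_sum
    intro i _
    exact (continuous_of_discreteTopology (f := x)).comp
      ((continuous_apply i).comp continuous_subtype_val)
  exact ⟨hint, by rw [IsNowhereDense, hclosed.closure_eq]; exact hint⟩
end

section
/- Let X be a normed space and (x_n) a sequence in X. If the set E = {s ∈ S : (∑_{i=1}^n x_{s(i)})_n is bounded} is not all of S, then E is a meager subset of S. -/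
/-- Any neighborhood of `t : IncSeq` contains a cylinder. -/
lemma incSeq_nhds_cylinder {t : IncSeq} {F : Set IncSeq} (hF : F ∈ nhds t) :
    ∃ k : ℕ, ∀ s : IncSeq, (∀ i < k, s.1 i = t.1 i) → s ∈ F := by
  rw [nhds_subtype_eq_comap, Filter.mem_comap] at hF
  obtain ⟨V, hV, hVF⟩ := hF
  rw [nhds_pi] at hV
  rw [Filter.mem_pi] at hV
  obtain ⟨I, hIfin, T, hT, hIT⟩ := hV
  simp only [nhds_discrete, Filter.mem_pure] at hT
  obtain ⟨k, hk⟩ := hIfin.bddAbove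
  refine ⟨k + 1, fun s hs => hVF ?_⟩
  apply hIT
  intro i hi
  have : i < k + 1 := Nat.lt_succ_of_le (hk hi)
  rw [hs i this]
  exact hT i

theorem E_meager_of_ne_univ
    {X : Type*} [NormedAddCommGroup X] [NormedSpace ℝ X] (x : ℕ → X)
    (h : {s : IncSeq | ∃ M : ℝ, ∀ n : ℕ, ‖∑ i ∈ Finset.range n, x (s.1 i)‖ ≤ M} ≠
      Set.univ) :
    IsMeagre {s : IncSeq | ∃ M : ℝ, ∀ n : ℕ, ‖∑ i ∈ Finset.range n, x (s.1 i)‖ ≤ M} := by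
  -- Extract a witness with unbounded partial sums
  obtain ⟨s₀, hs₀'⟩ := (Set.ne_univ_iff_exists_notMem _).mp h
  have hs₀ : ∀ M : ℝ, ∃ n : ℕ, M < ‖∑ i ∈ Finset.range n, x (s₀.1 i)‖ := by
    intro M
    by_contra hc
    push_neg at hc
    exact hs₀' ⟨M, hc⟩
  -- The closed pieces
  set F : ℕ → Set IncSeq :=
    fun M => {s : IncSeq | ∀ n : ℕ, ‖∑ i ∈ Finset.range n, x (s.1 i)‖ ≤ M} with hF
  have hsub : {s : IncSeq | ∃ M : ℝ, ∀ n : ℕ,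
      ‖∑ i ∈ Finset.range n, x (s.1 i)‖ ≤ M} ⊆ ⋃ M : ℕ, F M := by
    rintro s ⟨M, hM⟩
    exact Set.mem_iUnion.2 ⟨⌈M⌉₊, fun n => (hM n).trans (Nat.le_ceil M)⟩
  refine (isMeagre_iUnion fun M => ?_).mono hsub
  -- Each `F M` is closed
  have hcont : ∀ n : ℕ, Continuous fun s : IncSeq => ∑ i ∈ Finset.range n, x (s.1 i) := by
    intro n
    refine continuous_finset_sum _ fun i _ => ?_
    exact continuous_of_discreteTopology.comp ((continuous_apply i).comp continuous_subtype_val)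
  have hclosed : IsClosed (F M) := by
    have : F M = ⋂ n : ℕ, {s : IncSeq | ‖∑ i ∈ Finset.range n, x (s.1 i)‖ ≤ (M : ℝ)} := by
      ext s; simp [hF, Set.mem_iInter]
    rw [this]
    exact isClosed_iInter fun n =>
      isClosed_le ((hcont n).norm) continuous_const
  -- `F M` has empty interior
  have hint : interior (F M) = ∅ := by
    by_contra hne
    obtain ⟨t, ht⟩ := Set.nonempty_iff_ne_empty.mpr hne
    have hFnhds : F M ∈ nhds t := mem_interior_iff_mem_nhds.mp ht
    obtain ⟨k, hk⟩ := incSeq_nhds_cylinder hFnhds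
    -- build the perturbed sequence
    set N : ℕ := t.1 k + 1 with hN
    set s : ℕ → ℕ := fun i => if i < k then t.1 i else s₀.1 (i - k + N) with hsdef
    have hmono : StrictMono s := by
      apply strictMono_nat_of_lt_succ
      intro i
      rcases lt_trichotomy (i + 1) k with h1 | h1 | h1
      · simp only [hsdef]
        rw [if_pos (Nat.lt_of_succ_lt h1), if_pos h1]
        exact t.2 (Nat.lt_succ_self i)
      · simp only [hsdef]
        rw [if_pos (h1 ▸ Nat.lt_succ_self i), if_neg (by omega)]
        have h2 : i + 1 - k + N = N := by omega
        rw [h2]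
        calc t.1 i < t.1 k := t.2 (by omega)
          _ < N := Nat.lt_succ_self _
          _ ≤ s₀.1 N := s₀.2.le_apply
      · simp only [hsdef]
        rw [if_neg (by omega), if_neg (by omega)]
        exact s₀.2 (by omega)
    -- s agrees with t below k
    have hagree : ∀ i < k, s i = t.1 i := fun i hi => by simp [hsdef, hi]
    have hsF : (⟨s, hmono⟩ : IncSeq) ∈ F M := hk ⟨s, hmono⟩ hagree
    -- partial sums of s₀
    set P : ℕ → X := fun n => ∑ i ∈ Finset.range n, x (s₀.1 i) with hP
    set C : X := ∑ i ∈ Finset.range k, x (t.1 i) with hC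
    -- choose m large
    set B : ℝ := (Finset.range (N + 1)).sup' (by simp) (fun n => ‖P n‖) with hB
    obtain ⟨m, hm⟩ := hs₀ (max B ((M : ℝ) + ‖P N‖ + ‖C‖))
    have hmP : max B ((M : ℝ) + ‖P N‖ + ‖C‖) < ‖P m‖ := hm
    have hmN : N < m := by
      by_contra hle
      push_neg at hle
      have h1 : ‖P m‖ ≤ B :=
        Finset.le_sup' (fun n => ‖P n‖) (Finset.mem_range.mpr (by omega))
      have h2 : B < ‖P m‖ := lt_of_le_of_lt (le_max_left _ _) hmP
      linarith
    -- the key sum computation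
    have hsum : ∑ i ∈ Finset.range (k + (m - N)), x (s i) = C + (P m - P N) := by
      rw [Finset.sum_range_add]
      have h1 : ∑ i ∈ Finset.range k, x (s i) = C := by
        rw [hC]
        exact Finset.sum_congr rfl fun i hi => by
          rw [hagree i (Finset.mem_range.mp hi)]
      have h2 : ∑ i ∈ Finset.range (m - N), x (s (k + i)) = P m - P N := by
        have hm' : m = N + (m - N) := by omega
        have : P m = P N + ∑ i ∈ Finset.range (m - N), x (s₀.1 (N + i)) := by
          rw [hP]
          conv_lhs => rw [hm']
          exact Finset.sum_range_add _ _ _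
        rw [this]
        have heq : ∀ i, s (k + i) = s₀.1 (N + i) := by
          intro i
          simp only [hsdef]
          rw [if_neg (by omega)]
          have h3 : k + i - k + N = N + i := by omega
          rw [h3]
        simp only [heq]
        abel
      rw [h1, h2]
    -- contradiction
    have hbound := hsF (k + (m - N))
    rw [hsum] at hbound
    have hnorm : ‖P m‖ - ‖P N‖ - ‖C‖ ≤ ‖C + (P m - P N)‖ := by
      have h1 : ‖P m‖ - ‖P N‖ ≤ ‖P m - P N‖ := norm_sub_norm_le _ _
      have h2 : ‖P m - P N‖ ≤ ‖C + (P m - P N)‖ + ‖C‖ := by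
        calc ‖P m - P N‖ = ‖(C + (P m - P N)) - C‖ := by rw [add_sub_cancel_left]
          _ ≤ ‖C + (P m - P N)‖ + ‖C‖ := norm_sub_le _ _
      linarith
    have hgt : (M : ℝ) + ‖P N‖ + ‖C‖ < ‖P m‖ := lt_of_le_of_lt (le_max_right B _) hmP
    linarith
  -- conclude
  rw [isMeagre_iff_countable_union_isNowhereDense]
  refine ⟨{F M}, ?_, Set.countable_singleton _, by simp⟩
  intro u hu
  rw [Set.mem_singleton_iff] at hu
  rw [hu]
  exact hclosed.isNowhereDense_iff.mpr hint
end

section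
/- Let X be a normed space and (x_n) a sequence in X. If the set F = {p ∈ P : (∑_{i=1}^n x_{p(i)})_n is bounded} is not all of P, then F is a meager subset of P. -/
open Finset Filter Topology

lemma exists_bij_extend (f : ℕ → ℕ) (k : ℕ) (hf : Set.InjOn f (Set.Iio k)) :
    ∃ p : ℕ → ℕ, Function.Bijective p ∧ ∀ i < k, p i = f i := by
  classical
  set T : Finset ℕ := (Finset.range k).image f with hT
  set A : Set ℕ := Set.Ici k with hA
  set B : Set ℕ := {j | j ∉ T} with hB
  haveI : Infinite A := Set.infinite_coe_iff.mpr (Set.Ici_infinite k)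
  haveI : Infinite B := Set.infinite_coe_iff.mpr (T.finite_toSet.infinite_compl)
  haveI dA : Denumerable A := Nat.Subtype.denumerable A
  haveI dB : Denumerable B := Nat.Subtype.denumerable B
  let e : A ≃ B := (Denumerable.eqv A).trans (Denumerable.eqv B).symm
  refine ⟨fun i => if h : i < k then f i else (e ⟨i, le_of_not_gt h⟩ : ℕ), ⟨?_, ?_⟩, ?_⟩
  · intro i j hij
    by_cases hi : i < k <;> by_cases hj : j < k <;> simp only [hi, hj, dif_pos, dif_neg, dite_true, dite_false] at hij
    · exact hf hi hj hij
    · exact absurd (hij ▸ Finset.mem_image_of_mem f (Finset.mem_range.mpr hi)) (e ⟨j, le_of_not_gt hj⟩).2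
    · exact absurd (hij ▸ Finset.mem_image_of_mem f (Finset.mem_range.mpr hj)) (e ⟨i, le_of_not_gt hi⟩).2
    · have := e.injective (Subtype.ext hij)
      exact congrArg Subtype.val this
  · intro y
    by_cases hy : y ∈ T
    · simp only [hT, Finset.mem_image, Finset.mem_range] at hy
      obtain ⟨i, hi, rfl⟩ := hy
      exact ⟨i, by simp [hi]⟩
    · refine ⟨(e.symm ⟨y, hy⟩ : ℕ), ?_⟩
      have hk : ¬ ((e.symm ⟨y, hy⟩ : ℕ) < k) := not_lt.mpr (e.symm ⟨y, hy⟩).2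
      simp only [hk, dif_neg, dite_false]
      show ((e (e.symm ⟨y, hy⟩) : B) : ℕ) = y
      simp
  · intro i hi
    simp [hi]

lemma cyl_subset {f : ℕ → ℕ} {U : Set (ℕ → ℕ)} (hU : U ∈ 𝓝 f) :
    ∃ N, ∀ g : ℕ → ℕ, (∀ i < N, g i = f i) → g ∈ U := by
  rw [nhds_pi, Filter.mem_pi] at hU
  obtain ⟨I, hIfin, t, ht, hsub⟩ := hU
  obtain ⟨b, hb⟩ := hIfin.bddAbove
  refine ⟨b + 1, fun g hg => hsub fun i hi => ?_⟩
  have : i < b + 1 := Nat.lt_succ_of_le (hb hi)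
  rw [hg i this]
  exact mem_of_mem_nhds (ht i)


/-- `P`, the Polish space of bijections `ℕ → ℕ`,
as a subspace of the product space `ℕ → ℕ`. -/
abbrev BijSeq : Type := {p : ℕ → ℕ // Function.Bijective p}

theorem F_meager_of_ne_univ
    {X : Type*} [NormedAddCommGroup X] [NormedSpace ℝ X] (x : ℕ → X)
    (h : {p : BijSeq | ∃ M : ℝ, ∀ n : ℕ, ‖∑ i ∈ Finset.range n, x (p.1 i)‖ ≤ M} ≠
      Set.univ) :
    IsMeagre {p : BijSeq | ∃ M : ℝ, ∀ n : ℕ, ‖∑ i ∈ Finset.range n, x (p.1 i)‖ ≤ M} := by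
  classical
  set F : Set BijSeq := {p : BijSeq | ∃ M : ℝ, ∀ n : ℕ, ‖∑ i ∈ Finset.range n, x (p.1 i)‖ ≤ M} with hF
  obtain ⟨q, hq⟩ := Set.ne_univ_iff_exists_notMem F |>.mp h
  set C : ℕ → Set BijSeq := fun M => {p : BijSeq | ∀ n : ℕ, ‖∑ i ∈ Finset.range n, x (p.1 i)‖ ≤ M} with hC
  have hFC : F = ⋃ M : ℕ, C M := by
    ext p
    simp only [hF, hC, Set.mem_setOf_eq, Set.mem_iUnion]
    constructor
    · rintro ⟨M, hM⟩
      obtain ⟨M', hM'⟩ := exists_nat_ge M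
      exact ⟨M', fun n => (hM n).trans hM'⟩
    · rintro ⟨M, hM⟩; exact ⟨M, hM⟩
  rw [hFC]
  apply isMeagre_iUnion
  intro M
  -- C M is closed
  have hclosed : IsClosed (C M) := by
    have : C M = ⋂ n : ℕ, (fun p : BijSeq => ‖∑ i ∈ Finset.range n, x (p.1 i)‖) ⁻¹' Set.Iic (M : ℝ) := by
      ext p; simp [hC, Set.mem_iInter]
    rw [this]
    refine isClosed_iInter fun n => IsClosed.preimage ?_ isClosed_Iic
    exact (continuous_finset_sum _ fun i _ =>
      (continuous_of_discreteTopology (f := x)).comp ((continuous_apply i).comp continuous_subtype_val)).norm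
  -- C M has empty interior
  have hint : interior (C M) = ∅ := by
    by_contra hne
    obtain ⟨p₀, hp₀⟩ := Set.nonempty_iff_ne_empty.mpr hne
    have hmem : interior (C M) ∈ 𝓝 p₀ := isOpen_interior.mem_nhds hp₀
    replace hmem := (mem_nhds_subtype {p : ℕ → ℕ | Function.Bijective p} p₀ _).mp hmem
    obtain ⟨U, hU, hUsub⟩ := hmem
    obtain ⟨N, hN⟩ := cyl_subset hU
    -- every bijection agreeing with p₀ on range N lies in C M
    have hkey : ∀ p : BijSeq, (∀ i < N, p.1 i = p₀.1 i) → p ∈ C M := by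
      intro p hp
      have : p ∈ Subtype.val ⁻¹' U := hN p.1 hp
      exact interior_subset (hUsub this)
    -- derive q ∈ F, contradiction
    apply hq
    set P₀ : Finset ℕ := (Finset.range N).image p₀.1 with hP₀
    refine ⟨M + ∑ j ∈ P₀, ‖x j‖, fun n => ?_⟩
    set Q : Finset ℕ := (Finset.range n).image q.1 with hQ
    set D : Finset ℕ := Q \ P₀ with hD
    set d : ℕ := D.card with hd
    set m : ℕ := N + d with hm
    set g : ℕ → ℕ := fun i => if h : i < N then p₀.1 i else
      if h2 : i - N < d then (D.orderIsoOfFin rfl ⟨i - N, h2⟩ : ℕ) else i with hg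
    have hDval : ∀ (h2 : _), ((D.orderIsoOfFin rfl h2 : ℕ) ∈ D) := fun h2 => (D.orderIsoOfFin rfl h2).2
    have hinj : Set.InjOn g (Set.Iio m) := by
      intro i hi j hj hij
      simp only [Set.mem_Iio, hm] at hi hj
      by_cases h1 : i < N <;> by_cases h2 : j < N
      · simp only [hg, h1, h2, dif_pos] at hij
        exact p₀.2.1 hij
      · have hj2 : j - N < d := by omega
        simp only [hg, h1, h2, hj2, dif_pos, dif_neg] at hij
        have : p₀.1 i ∈ P₀ := Finset.mem_image_of_mem _ (Finset.mem_range.mpr h1)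
        rw [hij] at this
        exact ((Finset.mem_sdiff.mp (hDval ⟨j - N, hj2⟩)).2 this).elim
      · have hi2 : i - N < d := by omega
        simp only [hg, h1, h2, hi2, dif_pos, dif_neg] at hij
        have : p₀.1 j ∈ P₀ := Finset.mem_image_of_mem _ (Finset.mem_range.mpr h2)
        rw [← hij] at this
        exact ((Finset.mem_sdiff.mp (hDval ⟨i - N, hi2⟩)).2 this).elim
      · have hi2 : i - N < d := by omega
        have hj2 : j - N < d := by omega
        simp only [hg, h1, h2, hi2, hj2, dif_pos, dif_neg] at hij
        have := (D.orderIsoOfFin rfl).injective (Subtype.ext hij)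
        have : i - N = j - N := congrArg Fin.val this
        omega
    have himg : (Finset.range m).image g = P₀ ∪ D := by
      apply Finset.Subset.antisymm
      · intro y hy
        simp only [Finset.mem_image, Finset.mem_range] at hy
        obtain ⟨i, hi, rfl⟩ := hy
        by_cases h1 : i < N
        · exact Finset.mem_union_left _ (by simp only [hg, h1, dif_pos]; exact Finset.mem_image_of_mem _ (Finset.mem_range.mpr h1))
        · have hi2 : i - N < d := by omega
          simp only [hg, h1, hi2, dif_pos, dif_neg]
          exact Finset.mem_union_right _ (hDval ⟨i - N, hi2⟩)
      · intro y hy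
        rcases Finset.mem_union.mp hy with hy | hy
        · simp only [hP₀, Finset.mem_image, Finset.mem_range] at hy
          obtain ⟨i, hi, rfl⟩ := hy
          exact Finset.mem_image.mpr ⟨i, Finset.mem_range.mpr (by omega), by simp [hg, hi]⟩
        · obtain ⟨l, hl⟩ := (D.orderIsoOfFin (rfl : D.card = d)).surjective ⟨y, hy⟩
          refine Finset.mem_image.mpr ⟨N + l, Finset.mem_range.mpr (by omega), ?_⟩
          have h1 : ¬ (N + (l : ℕ) < N) := by omega
          have h2 : N + (l : ℕ) - N < d := by omega
          simp only [hg, h1, h2, dif_pos, dif_neg]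
          have : (⟨N + (l : ℕ) - N, h2⟩ : Fin d) = l := by ext; simp
          rw [this, hl]
          simp
    obtain ⟨p, hpbij, hpg⟩ := exists_bij_extend g m hinj
    have hpC : (⟨p, hpbij⟩ : BijSeq) ∈ C M := by
      apply hkey
      intro i hi
      show p i = p₀.1 i
      rw [hpg i (by omega)]
      simp [hg, hi]
    have hsum : ∑ i ∈ Finset.range m, x (p i) = ∑ j ∈ P₀ ∪ D, x j := by
      rw [← himg]
      rw [Finset.sum_image]
      · exact Finset.sum_congr rfl fun i hi => by rw [hpg i (Finset.mem_range.mp hi)]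
      · exact fun a ha b hb hab => hinj (Finset.mem_range.mp ha) (Finset.mem_range.mp hb) hab
    have hQsub : Q ⊆ P₀ ∪ D := fun y hy => by
      by_cases hyP : y ∈ P₀
      · exact Finset.mem_union_left _ hyP
      · exact Finset.mem_union_right _ (Finset.mem_sdiff.mpr ⟨hy, hyP⟩)
    have hsplit : ∑ j ∈ (P₀ ∪ D) \ Q, x j + ∑ j ∈ Q, x j = ∑ j ∈ P₀ ∪ D, x j :=
      Finset.sum_sdiff hQsub
    have hqsum : ∑ i ∈ Finset.range n, x (q.1 i) = ∑ j ∈ Q, x j := by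
      rw [hQ, Finset.sum_image]
      intro a _ b _ hab
      exact q.2.1 hab
    have hSdQ : (P₀ ∪ D) \ Q ⊆ P₀ := by
      intro y hy
      obtain ⟨hy1, hy2⟩ := Finset.mem_sdiff.mp hy
      rcases Finset.mem_union.mp hy1 with hy | hy
      · exact hy
      · exact (hy2 (Finset.mem_sdiff.mp hy).1).elim
    calc ‖∑ i ∈ Finset.range n, x (q.1 i)‖ = ‖∑ j ∈ Q, x j‖ := by rw [hqsum]
      _ = ‖∑ j ∈ P₀ ∪ D, x j - ∑ j ∈ (P₀ ∪ D) \ Q, x j‖ := by rw [← hsplit, add_sub_cancel_left]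
      _ ≤ ‖∑ j ∈ P₀ ∪ D, x j‖ + ‖∑ j ∈ (P₀ ∪ D) \ Q, x j‖ := norm_sub_le _ _
      _ ≤ M + ∑ j ∈ P₀, ‖x j‖ := by
          gcongr
          · rw [← hsum]; exact hpC m
          · exact (norm_sum_le _ _).trans (Finset.sum_le_sum_of_subset_of_nonneg hSdQ
              (fun j _ _ => norm_nonneg _))
  rw [IsMeagre]
  exact residual_of_dense_open hclosed.isOpen_compl (interior_eq_empty_iff_dense_compl.mp hint)
end

section
/- Let I be an ideal on ℕ (containing all finite sets, proper, closed under subsets and finite unions). If I has the Baire property as a subset of the Cantor space {0,1}^ℕ (identifying subsets of ℕ with their characteristic functions), then there is a strictly increasing sequence n_1 < n_2 < ⋯ in ℕ such that no member of I contains infinitely many of the intervals [n_i, n_{i+1}) ∩ ℕ. -/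
open Set Topology Filter

namespace TalagrandAux

abbrev X := ℕ → Bool

/-- Basic clopen cylinder: all `t` agreeing with `s` below `m`. -/
def Cyl (m : ℕ) (s : X) : Set X := {t | ∀ k, k < m → t k = s k}

lemma mem_cyl_self (m : ℕ) (s : X) : s ∈ Cyl m s := fun _ _ => rfl

lemma cyl_anti {m m' : ℕ} (h : m' ≤ m) (s : X) : Cyl m s ⊆ Cyl m' s :=
  fun _ ht k hk => ht k (lt_of_lt_of_le hk h)

lemma isOpen_cyl (m : ℕ) (s : X) : IsOpen (Cyl m s) := by
  have h1 : Cyl m s = ⋂ k ∈ Finset.range m, {t : X | t k = s k} := by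
    ext t; simp [Cyl]
  rw [h1]
  refine isOpen_biInter_finset fun k _ => ?_
  have h2 : {t : X | t k = s k} = (fun t : X => t k) ⁻¹' {s k} := rfl
  rw [h2]
  exact (isOpen_discrete _).preimage (continuous_apply k)

lemma exists_cyl_subset {U : Set X} (hU : IsOpen U) {t0 : X} (ht0 : t0 ∈ U) :
    ∃ m, Cyl m t0 ⊆ U := by
  rcases (isOpen_pi_iff.1 hU) t0 ht0 with ⟨F, u, hu, hsub⟩
  refine ⟨F.sup id + 1, fun t ht => hsub ?_⟩
  intro i hi
  have hti : t i = t0 i := ht i (Nat.lt_succ_of_le (Finset.le_sup (f := id) hi))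
  rw [hti]; exact (hu i hi).2

/-- Coordinatewise xor with a fixed mask, as a homeomorphism of Cantor space. -/
def flipBy (c : X) : X ≃ₜ X where
  toFun t := fun k => xor (t k) (c k)
  invFun t := fun k => xor (t k) (c k)
  left_inv t := by funext k; simp [Bool.xor_assoc]
  right_inv t := by funext k; simp [Bool.xor_assoc]
  continuous_toFun := continuous_pi fun k =>
    Continuous.comp (f := fun t : X => t k) (g := fun b => xor b (c k))
      continuous_of_discreteTopology (continuous_apply k)
  continuous_invFun := continuous_pi fun k =>
    Continuous.comp (f := fun t : X => t k) (g := fun b => xor b (c k))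
      continuous_of_discreteTopology (continuous_apply k)

@[simp] lemma flipBy_apply (c t : X) (k : ℕ) : flipBy c t k = xor (t k) (c k) := rfl

/-- Extend a finite binary string to an element of Cantor space by zeros. -/
def extn (n : ℕ) (σ : Fin n → Bool) : X := fun k => if h : k < n then σ ⟨k, h⟩ else false

/-- The recursive sequence of interval endpoints. -/
def buildE (M : ℕ → ℕ → X → ℕ) : ℕ → ℕ
  | 0 => 0
  | i + 1 => max (buildE M i + 1)
      (Finset.univ.sup fun σ : Fin (buildE M i) → Bool => M i (buildE M i) (extn _ σ))

/-- Iterate of a "next element" function. -/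
def iter (g : ℕ → ℕ) : ℕ → ℕ
  | 0 => g 0
  | j + 1 => g (iter g j)

/-- The recursive sequence of approximations to the diagonal point. -/
def buildU (M : ℕ → ℕ → X → ℕ) (TT : ℕ → ℕ → X → X) (e f : ℕ → ℕ) : ℕ → X
  | 0 => fun _ => false
  | j + 1 => fun k =>
      let s := extn (e (f j)) (fun i => buildU M TT e f j i.val)
      if k < M (f j) (e (f j)) s then TT (f j) (e (f j)) s k else false

end TalagrandAux

/-- An ideal `I` on `ℕ` has the Baire property if the corresponding set of
characteristic functions is Baire measurable in the Cantor space `ℕ → Bool`. -/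
def IdealHasBaireProperty (I : Set (Set ℕ)) : Prop :=
  BaireMeasurableSet {t : ℕ → Bool | {n : ℕ | t n = true} ∈ I}

theorem talagrand_characterisation (I : Set (Set ℕ))
    (hEmpty : ∅ ∈ I)
    (hUnion : ∀ A B : Set ℕ, A ∈ I → B ∈ I → A ∪ B ∈ I)
    (hSub : ∀ A B : Set ℕ, A ⊆ B → B ∈ I → A ∈ I)
    (hProper : (Set.univ : Set ℕ) ∉ I)
    (hFin : ∀ A : Set ℕ, A.Finite → A ∈ I)
    (hBP : IdealHasBaireProperty I) :
    ∃ e : ℕ → ℕ, StrictMono e ∧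
      ∀ A ∈ I, {i : ℕ | Set.Ico (e i) (e (i + 1)) ⊆ A}.Finite := by
  classical
  open TalagrandAux in
  set T : Set X := {t : X | {n : ℕ | t n = true} ∈ I} with hTdef
  -- invariance under finite modifications
  have hinv : ∀ t t' : X, {n | t n ≠ t' n}.Finite → t ∈ T → t' ∈ T := by
    intro t t' hfin ht
    have hsubset : {n | t' n = true} ⊆ {n | t n = true} ∪ {n | t n ≠ t' n} := by
      intro n hn
      by_cases h : t n = t' n
      · left; show t n = true; rw [h]; exact hn
      · right; exact h
    exact hSub _ _ hsubset (hUnion _ _ ht (hFin _ hfin))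
  -- Step 1: T is meagre
  have hmeagre : IsMeagre T := by
    by_contra hnm
    rcases hBP.residualEq_isOpen with ⟨U, hUo, hTU⟩
    have hdiff : IsMeagre ((T \ U) ∪ (U \ T)) := by
      rw [IsMeagre]
      filter_upwards [hTU] with x hx
      have hx' : x ∈ T ↔ x ∈ U := iff_of_eq hx
      simp [hx']
    rcases U.eq_empty_or_nonempty with hUe | ⟨t0, ht0⟩
    · exact hnm (hdiff.mono (by simp [hUe]))
    obtain ⟨m, hm⟩ := exists_cyl_subset hUo ht0
    -- T is comeager in every cylinder of length m
    have hbase : IsMeagre (Tᶜ ∩ Cyl m t0) := by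
      refine hdiff.mono fun t ⟨htT, htC⟩ => Or.inr ⟨hm htC, htT⟩
    have hcyl : ∀ s : X, IsMeagre (Tᶜ ∩ Cyl m s) := by
      intro s
      set c : X := fun k => if k < m then xor (t0 k) (s k) else false with hc
      have key : Tᶜ ∩ Cyl m s = (flipBy c) ⁻¹' (Tᶜ ∩ Cyl m t0) := by
        ext t
        have hdf : ∀ t : X, {n | t n ≠ flipBy c t n}.Finite := by
          intro t
          refine (Set.finite_Iio m).subset fun n hn => ?_
          simp only [mem_setOf_eq, flipBy_apply] at hn
          by_contra hnm'
          simp only [Set.mem_Iio] at hnm'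
          have hcn : c n = false := by rw [hc]; exact if_neg hnm'
          simp [hcn] at hn
        have h1 : flipBy c t ∈ T ↔ t ∈ T := by
          constructor
          · intro h
            refine hinv _ _ ?_ h
            have := hdf t
            refine this.subset fun n hn => fun hcon => hn ?_
            exact hcon.symm ▸ rfl
          · intro h; exact hinv _ _ (hdf t) h
        have h2 : flipBy c t ∈ Cyl m t0 ↔ t ∈ Cyl m s := by
          simp only [Cyl, mem_setOf_eq, flipBy_apply]
          constructor
          · intro h k hk
            have := h k hk
            rw [hc] at this
            simp only [if_pos hk] at this
            revert this
            cases t k <;> cases t0 k <;> cases s k <;> simp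
          · intro h k hk
            have := h k hk
            rw [hc]
            simp only [if_pos hk]
            rw [this]
            cases t0 k <;> cases s k <;> simp
        simp only [mem_inter_iff, mem_preimage, mem_compl_iff]
        rw [h1, h2]
      rw [key]
      exact hbase.preimage_of_isOpenMap (flipBy c).continuous (flipBy c).isOpenMap
    have hcover : Tᶜ ⊆ ⋃ σ : Fin m → Bool, (Tᶜ ∩ Cyl m (extn m σ)) := by
      intro t ht
      refine mem_iUnion.2 ⟨fun k => t k.val, ht, fun k hk => ?_⟩
      simp [extn, hk]
    have hTcm : IsMeagre Tᶜ := by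
      refine IsMeagre.mono hcover ?_
      rw [IsMeagre, compl_iUnion]
      exact (countable_iInter_mem).2 fun σ => hcyl _
    -- T is comeager; so is its image under complementation; contradiction with properness
    have hres : T ∈ residual X := by rw [← compl_compl T]; exact hTcm
    have hneg : (flipBy (fun _ => true)) ⁻¹' T ∈ residual X :=
      tendsto_residual_of_isOpenMap (flipBy _).continuous (flipBy _).isOpenMap hres
    have hint : (T ∩ (flipBy (fun _ => true)) ⁻¹' T).Nonempty :=
      (dense_of_mem_residual (inter_mem hres hneg)).nonempty
    obtain ⟨t, htT, htN⟩ := hint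
    have hA : {n | t n = true} ∈ I := htT
    have hAc : {n | t n = true}ᶜ ∈ I := by
      have h1 : {n | (flipBy (fun _ => true) t) n = true} ∈ I := htN
      have h2 : {n | (flipBy (fun _ => true) t) n = true} = {n | t n = true}ᶜ := by
        ext n
        simp [flipBy_apply, Bool.xor_true]
      rwa [h2] at h1
    exact hProper (by
      have := hUnion _ _ hA hAc
      rwa [Set.union_compl_self] at this)
  -- Step 2: decompose the meager set
  have hres' : Tᶜ ∈ residual X := hmeagre
  rcases mem_residual_iff.1 hres' with ⟨S, hSo, hSd, hSc, hSsub⟩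
  obtain ⟨V, hV⟩ := (hSc.insert univ).exists_eq_range (insert_nonempty _ _)
  have hVmem : ∀ n, V n ∈ insert univ S := fun n => by rw [hV]; exact mem_range_self n
  have hVo : ∀ n, IsOpen (V n) := by
    intro n; rcases hVmem n with h | h
    · rw [h]; exact isOpen_univ
    · exact hSo _ h
  have hVd : ∀ n, Dense (V n) := by
    intro n; rcases hVmem n with h | h
    · rw [h]; exact dense_univ
    · exact hSd _ h
  have hVsub : (⋂ n, V n) ⊆ Tᶜ := by
    refine subset_trans (fun t ht => ?_) hSsub
    intro s hs
    have : s ∈ insert univ S := mem_insert_of_mem _ hs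
    rw [hV] at this
    obtain ⟨n, rfl⟩ := this
    exact mem_iInter.1 ht n
  set W : ℕ → Set X := fun i => ⋂ k ∈ Finset.range (i + 1), V k with hWdef
  have hWo : ∀ i, IsOpen (W i) := fun i => isOpen_biInter_finset fun k _ => hVo k
  have hWd : ∀ i, Dense (W i) := fun i =>
    dense_biInter_of_isOpen (fun k _ => hVo k) (Finset.range (i + 1)).countable_toSet
      (fun k _ => hVd k)
  have hWanti : ∀ i j, i ≤ j → W j ⊆ W i := by
    intro i j hij t ht
    refine mem_iInter₂.2 fun k hk => mem_iInter₂.1 ht k ?_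
    exact Finset.mem_range.2 (lt_of_lt_of_le (Finset.mem_range.1 hk) (by omega))
  have hWV : ∀ n, W n ⊆ V n := fun n t ht =>
    mem_iInter₂.1 ht n (Finset.mem_range.2 (Nat.lt_succ_self n))
  -- Step 3: the extension property
  have key : ∀ (i n : ℕ) (s : X), ∃ m τ, n < m ∧ (∀ k, k < n → τ k = s k) ∧ Cyl m τ ⊆ W i := by
    intro i n s
    obtain ⟨t1, ht1C, ht1W⟩ := (hWd i).inter_open_nonempty _ (isOpen_cyl n s) ⟨s, mem_cyl_self n s⟩
    obtain ⟨m0, hm0⟩ := exists_cyl_subset (hWo i) ht1W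
    exact ⟨max m0 n + 1, t1, by omega,
      fun k hk => ht1C k hk,
      (cyl_anti (by omega) t1).trans hm0⟩
  choose M TT hMgt hTagree hTsub using key
  set e : ℕ → ℕ := buildE M with hedef
  have heS : ∀ i, e (i + 1) = max (e i + 1)
      (Finset.univ.sup fun σ : Fin (e i) → Bool => M i (e i) (extn _ σ)) := fun i => rfl
  have hemono : StrictMono e := strictMono_nat_of_lt_succ fun i => by
    rw [heS]; omega
  have hbound : ∀ i (σ : Fin (e i) → Bool), M i (e i) (extn _ σ) ≤ e (i + 1) := by
    intro i σ
    rw [heS]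
    exact le_trans
      (Finset.le_sup (f := fun σ : Fin (e i) → Bool => M i (e i) (extn _ σ)) (Finset.mem_univ σ))
      (le_max_right _ _)
  refine ⟨e, hemono, ?_⟩
  intro A hA
  by_contra hfinA
  have hinf : {i : ℕ | Set.Ico (e i) (e (i + 1)) ⊆ A}.Infinite := hfinA
  have hex : ∀ n : ℕ, ∃ m, m ∈ {i : ℕ | Set.Ico (e i) (e (i + 1)) ⊆ A} ∧ n < m := by
    intro n
    obtain ⟨m, hm1, hm2⟩ := hinf.exists_gt n
    exact ⟨m, hm1, hm2⟩
  choose g hgmem hglt using hex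
  set f : ℕ → ℕ := iter g with hfdef
  have hfmem : ∀ j, Set.Ico (e (f j)) (e (f j + 1)) ⊆ A := by
    intro j; cases j with
    | zero => exact hgmem 0
    | succ j => exact hgmem (f j)
  have hfmono : StrictMono f := strictMono_nat_of_lt_succ fun j => hglt (f j)
  have hfle : ∀ j, j ≤ f j := fun j => hfmono.le_apply
  have hele : ∀ i, i ≤ e i := fun i => hemono.le_apply
  set u : ℕ → X := buildU M TT e f with hudef
  set sj : ℕ → X := fun j => extn (e (f j)) (fun i => u j i.val) with hsjdef
  set mj : ℕ → ℕ := fun j => M (f j) (e (f j)) (sj j) with hmjdef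
  have hstep : ∀ j k, u (j + 1) k = if k < mj j then TT (f j) (e (f j)) (sj j) k else false :=
    fun j k => rfl
  have hsju : ∀ j k, k < e (f j) → sj j k = u j k := by
    intro j k hk; simp [hsjdef, extn, hk]
  have hmjgt : ∀ j, e (f j) < mj j := fun j => hMgt _ _ _
  have hmjle : ∀ j, mj j ≤ e (f j + 1) := fun j => hbound (f j) _
  have hagree : ∀ j k, k < e (f j) → u (j + 1) k = u j k := by
    intro j k hk
    rw [hstep, if_pos (lt_trans hk (hmjgt j)), hTagree _ _ _ k hk, hsju j k hk]
  have hstab : ∀ j j', j ≤ j' → ∀ k, k < e (f j) → u j' k = u j k := by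
    intro j j' hjj'
    induction j' with
    | zero => intro k hk; cases Nat.le_zero.1 hjj'; rfl
    | succ j' ih =>
      intro k hk
      rcases Nat.lt_or_ge j (j' + 1) with h | h
      · have hj' : j ≤ j' := Nat.lt_succ_iff.1 h
        have hk' : k < e (f j') :=
          lt_of_lt_of_le hk (hemono.le_iff_le.2 (hfmono.le_iff_le.2 hj'))
        rw [hagree j' k hk', ih hj' k hk]
      · have : j = j' + 1 := le_antisymm hjj' h
        subst this; rfl
  set t : X := fun k => u (k + 1) k with htdef
  have hts : ∀ j k, k < e (f j) → t k = u j k := by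
    intro j k hk
    show u (k + 1) k = u j k
    rcases le_total j (k + 1) with h | h
    · exact hstab j (k + 1) h k hk
    · have hk' : k < e (f (k + 1)) :=
        lt_of_lt_of_le (Nat.lt_succ_self k) (le_trans (hfle (k + 1)) (hele _))
      exact (hstab (k + 1) j h k hk').symm
  -- t lies in every W i
  have htW : ∀ j, t ∈ W (f j) := by
    intro j
    refine hTsub (f j) (e (f j)) (sj j) ?_
    intro k hk
    have hk2 : k < e (f (j + 1)) :=
      lt_of_lt_of_le hk (le_trans (hmjle j)
        (hemono.le_iff_le.2 (Nat.succ_le_of_lt (hfmono (Nat.lt_succ_self j)))))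
    have : t k = u (j + 1) k := hts (j + 1) k hk2
    rw [this, hstep, if_pos hk]
  have htWall : ∀ i, t ∈ W i := fun i => hWanti i (f i) (hfle i) (htW i)
  have htnotT : t ∉ T := by
    have : t ∈ ⋂ n, V n := mem_iInter.2 fun n => hWV n (htWall n)
    exact hVsub this
  -- the set of true coordinates of t is contained in A
  have hBA : {n | t n = true} ⊆ A := by
    have huA : ∀ j k, u j k = true → k ∈ A := by
      intro j
      induction j with
      | zero => intro k hk; exact absurd hk (by simp [hudef, buildU])
      | succ j ih =>
        intro k hk
        rcases Nat.lt_or_ge k (e (f j)) with h | h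
        · exact ih k (by rwa [hagree j k h] at hk)
        · rw [hstep] at hk
          by_cases h2 : k < mj j
          · exact hfmem j ⟨h, lt_of_lt_of_le h2 (hmjle j)⟩
          · rw [if_neg h2] at hk; exact absurd hk (by simp)
    intro k hk
    exact huA (k + 1) k hk
  exact htnotT (hSub _ _ hBA hA)
end

section
/- Let X be a Banach space, (x_n) a sequence in X with liminf ‖x_n‖ = 0, and I an ideal on ℕ with the Baire property. If there exists a strictly increasing s' : ℕ → ℕ for which the partial sums of ∑ x_{s'(n)} are unbounded, then the set E(I) = {s ∈ S : (∑_{i=1}^n x_{s(i)})_n is I-bounded} is meager in S. -/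
open Filter

section EIdealAux
open Topology

namespace EIdeal

abbrev Cantor := ℕ → Bool

/-- flip by a pattern -/
def cflip (e : Cantor) (t : Cantor) : Cantor := fun n => xor (t n) (e n)

lemma cflip_invol (e : Cantor) : Function.Involutive (cflip e) := by
  intro t; funext n; simp [cflip, Bool.xor_assoc]

lemma cflip_cont (e : Cantor) : Continuous (cflip e) :=
  continuous_pi fun n => (continuous_of_discreteTopology
    (f := fun b : Bool => xor b (e n))).comp (continuous_apply n)

def cflipHomeo (e : Cantor) : Cantor ≃ₜ Cantor where
  toFun := cflip e
  invFun := cflip e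
  left_inv := cflip_invol e
  right_inv := cflip_invol e
  continuous_toFun := cflip_cont e
  continuous_invFun := cflip_cont e

lemma isMeagre_preimage_cflip {S : Set Cantor} (e : Cantor) (h : IsMeagre S) :
    IsMeagre (cflip e ⁻¹' S) := by
  have := tendsto_residual_of_isOpenMap (cflip_cont e) (cflipHomeo e).isOpenMap
  exact this h

variable {I : Set (Set ℕ)}
variable (hUnion : ∀ A B : Set ℕ, A ∈ I → B ∈ I → A ∪ B ∈ I)
  (hSub : ∀ A B : Set ℕ, A ⊆ B → B ∈ I → A ∈ I)
  (hProper : (Set.univ : Set ℕ) ∉ I)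
  (hFin : ∀ A : Set ℕ, A.Finite → A ∈ I)

/-- the set of characteristic functions of members of I -/
def JJ (I : Set (Set ℕ)) : Set Cantor := {t : Cantor | {n : ℕ | t n = true} ∈ I}

include hUnion hSub hFin in
lemma JJ_flip {e t : Cantor} (he : {n | e n = true}.Finite) (ht : t ∈ JJ I) :
    cflip e t ∈ JJ I := by
  refine hSub _ ({n | t n = true} ∪ {n | e n = true}) ?_ (hUnion _ _ ht (hFin _ he))
  intro n hn
  have hn' : xor (t n) (e n) = true := hn
  rw [Set.mem_union]
  rcases Bool.eq_false_or_eq_true (t n) with h | h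
  · left; exact h
  · right; show e n = true; rwa [h, Bool.false_xor] at hn'

include hUnion hSub hProper hFin in
lemma JJ_meagre (hBP : BaireMeasurableSet (JJ I)) : IsMeagre (JJ I) := by
  obtain ⟨U, hUopen, hJU⟩ := hBP.residualEq_isOpen
  have hD : {t : Cantor | (t ∈ JJ I) = (t ∈ U)} ∈ residual Cantor := hJU
  rcases Set.eq_empty_or_nonempty U with hU | ⟨u, hu⟩
  · subst hU
    rw [IsMeagre]
    refine mem_of_superset hD ?_
    intro t ht hmem
    simp only [Set.mem_setOf_eq] at ht
    rw [ht] at hmem; exact hmem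
  · exfalso
    -- find a cylinder inside U
    obtain ⟨K, w, hw, hKw⟩ := isOpen_pi_iff.mp hUopen u hu
    set C : Set Cantor := {f | ∀ i ∈ K, f i = u i} with hC
    have hCU : C ⊆ U := by
      intro f hf
      apply hKw
      intro a ha
      rw [hf a ha]; exact (hw a ha).2
    -- C \ JJ I is meagre
    have hCJ : IsMeagre (C \ JJ I) := by
      rw [IsMeagre]
      refine mem_of_superset hD ?_
      intro t ht
      simp only [Set.mem_setOf_eq] at ht
      intro ⟨h1, h2⟩
      exact h2 (ht ▸ (hCU h1) : t ∈ JJ I)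
    -- JJ I is comeagre
    have hJres : JJ I ∈ residual Cantor := by
      set T : ({a // a ∈ K} → Bool) → Set Cantor := fun v =>
        cflip (fun n => if h : n ∈ K then xor (v ⟨n, h⟩) (u n) else false) ⁻¹' (C \ JJ I)
      have hTm : ∀ v, IsMeagre (T v) := fun v => isMeagre_preimage_cflip _ hCJ
      have hsub : (⋂ v, (T v)ᶜ) ⊆ JJ I := by
        intro f hf
        by_contra hfJ
        set v : {a // a ∈ K} → Bool := fun a => f a with hv
        have : f ∈ T v := by
          simp only [T, Set.mem_preimage]
          constructor
          · intro i hi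
            simp [cflip, hv, hi]
          · intro hmem
            apply hfJ
            have := JJ_flip hUnion hSub hFin (e := fun n => if h : n ∈ K then xor (v ⟨n, h⟩) (u n) else false)
              (t := cflip _ f) ?_ hmem
            · rwa [cflip_invol] at this
            · apply Set.Finite.subset K.finite_toSet
              intro n hn
              simp only [Set.mem_setOf_eq] at hn
              by_contra hnK
              have hnK' : ¬ n ∈ K := by simpa using hnK
              rw [dif_neg hnK'] at hn
              exact Bool.false_ne_true hn
        exact (Set.mem_iInter.mp hf v) this
      refine mem_of_superset ?_ hsub
      exact countable_iInter_mem.mpr fun v => hTm v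
    -- flip everything
    have hJres' : (cflip (fun _ => true) ⁻¹' JJ I) ∈ residual Cantor := by
      have := tendsto_residual_of_isOpenMap (cflip_cont (fun _ => true))
        (cflipHomeo (fun _ => true)).isOpenMap
      exact this hJres
    have : (JJ I ∩ (cflip (fun _ => true) ⁻¹' JJ I)).Nonempty := by
      have hd := dense_of_mem_residual (inter_mem hJres hJres')
      exact hd.nonempty
    obtain ⟨t, ht1, ht2⟩ := this
    apply hProper
    have := hUnion _ _ ht1 ht2
    convert this using 1
    ext n
    simp only [Set.mem_univ, Set.mem_union, Set.mem_setOf_eq, cflip, true_iff]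
    rcases Bool.eq_false_or_eq_true (t n) with h | h <;> simp [h]

end EIdeal

namespace EIdeal
open Classical in
/-- the avoidance extension lemma for a closed set with dense complement -/
lemma cyl_avoid {F : Set Cantor} (hF : IsClosed F) (hd : Dense Fᶜ) (m : ℕ) :
    ∃ m', m < m' ∧ ∀ σ : Cantor, ∃ τ : Cantor,
      ∀ t : Cantor, (∀ i, i < m → t i = σ i) → (∀ i, m ≤ i → i < m' → t i = τ i) → t ∉ F := by
  have key : ∀ σ : Cantor, ∃ ℓ : ℕ, ∃ τ : Cantor,
      ∀ t : Cantor, (∀ i, i < m → t i = σ i) → (∀ i, m ≤ i → i < ℓ → t i = τ i) → t ∉ F := by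
    intro σ
    have hopen : IsOpen ((↑(Finset.range m) : Set ℕ).pi (fun i => ({σ i} : Set Bool))) :=
      isOpen_set_pi (Finset.range m).finite_toSet (fun a _ => isOpen_discrete _)
    have hne : ((↑(Finset.range m) : Set ℕ).pi (fun i => ({σ i} : Set Bool))).Nonempty :=
      ⟨σ, fun i _ => rfl⟩
    obtain ⟨p, hpF, hp⟩ := hd.exists_mem_open hopen hne
    obtain ⟨K, w, hw, hKw⟩ := isOpen_pi_iff.mp hF.isOpen_compl p hpF
    refine ⟨(K.sup id) + 1, p, fun t h1 h2 htF => ?_⟩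
    have : t ∈ Fᶜ := by
      apply hKw
      intro a ha
      have hta : t a = p a := by
        rcases lt_or_ge a m with h | h
        · rw [h1 a h]
          exact (hp a (by simpa using h)).symm
        · exact h2 a h (Nat.lt_succ_of_le (Finset.le_sup (f := id) ha))
      rw [hta]
      exact (hw a ha).2
    exact this htF
  set ℓf : Cantor → ℕ := fun σ => (key σ).choose with hℓf
  set pad : (Fin m → Bool) → Cantor := fun v i => if h : i < m then v ⟨i, h⟩ else false with hpad
  set m' : ℕ := max (m+1) ((Finset.univ : Finset (Fin m → Bool)).sup fun v => ℓf (pad v)) with hm'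
  refine ⟨m', lt_of_lt_of_le (Nat.lt_succ_self m) (le_max_left _ _), fun σ => ?_⟩
  set v : Fin m → Bool := fun i => σ i with hv
  refine ⟨(key (pad v)).choose_spec.choose, fun t h1 h2 => ?_⟩
  apply (key (pad v)).choose_spec.choose_spec t
  · intro i hi
    rw [h1 i hi]
    simp [hpad, hv, hi]
  · intro i h h'
    refine h2 i h (lt_of_lt_of_le h' ?_)
    calc ℓf (pad v) ≤ (Finset.univ : Finset (Fin m → Bool)).sup fun v => ℓf (pad v) :=
          Finset.le_sup (f := fun v => ℓf (pad v)) (Finset.mem_univ v)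
      _ ≤ m' := le_max_right _ _

end EIdeal

namespace EIdeal

open Classical in
noncomputable def BkAux (nn : ℕ → ℕ) (τ : ℕ → Cantor → Cantor) (A : Set ℕ) : ℕ → Cantor
  | 0 => fun _ => false
  | (k+1) => fun i =>
      if i < nn k then BkAux nn τ A k i
      else if i < nn (k+1) then
        (if Set.Ico (nn k) (nn (k+1)) ⊆ A then τ k (BkAux nn τ A k) i
         else decide (i ∈ A))
      else false

variable {I : Set (Set ℕ)}

lemma exists_intervals (hSub : ∀ A B : Set ℕ, A ⊆ B → B ∈ I → A ∈ I)
    (hmeagre : IsMeagre (JJ I)) :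
    ∃ nn : ℕ → ℕ, StrictMono nn ∧
      ∀ A : Set ℕ, A ∈ I → {k | Set.Ico (nn k) (nn (k+1)) ⊆ A}.Finite := by
  classical
  obtain ⟨S, hSnwd, hScnt, hJS⟩ := isMeagre_iff_countable_union_isNowhereDense.mp hmeagre
  obtain ⟨f, hf⟩ := Set.Countable.exists_eq_range (hScnt.insert ∅)
    ⟨∅, Set.mem_insert _ _⟩
  have hfnwd : ∀ k, IsNowhereDense (f k) := by
    intro k
    have : f k ∈ insert ∅ S := hf ▸ Set.mem_range_self k
    rcases this with h | h
    · rw [h]; exact isNowhereDense_empty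
    · exact hSnwd _ h
  set F : ℕ → Set Cantor := fun k => ⋃ i ∈ Finset.range (k+1), closure (f i) with hF
  have hFclosed : ∀ k, IsClosed (F k) := fun k =>
    Set.Finite.isClosed_biUnion (Finset.range (k+1)).finite_toSet (fun i _ => isClosed_closure)
  have hFd : ∀ k, Dense (F k)ᶜ := by
    have key : ∀ k : ℕ, Dense (⋃ i ∈ Finset.range k, closure (f i))ᶜ := by
      intro k
      induction k with
      | zero => simp
      | succ k ih =>
        have : (⋃ i ∈ Finset.range (k+1), closure (f i)) =
            (⋃ i ∈ Finset.range k, closure (f i)) ∪ closure (f k) := by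
          rw [Finset.range_add_one]
          simp [Set.biUnion_insert, Set.union_comm]
        rw [this, Set.compl_union]
        refine Dense.inter_of_isOpen_left ih ?_ ?_
        · exact interior_eq_empty_iff_dense_compl.mp (hfnwd k)
        · exact (Set.Finite.isClosed_biUnion (Finset.range k).finite_toSet
            (fun i _ => isClosed_closure)).isOpen_compl
    exact fun k => key (k+1)
  -- build the interval endpoints
  have step : ∀ k m, ∃ m', m < m' ∧ ∀ σ : Cantor, ∃ τ : Cantor,
      ∀ t : Cantor, (∀ i, i < m → t i = σ i) → (∀ i, m ≤ i → i < m' → t i = τ i) → t ∉ F k :=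
    fun k m => cyl_avoid (hFclosed k) (hFd k) m
  set nn : ℕ → ℕ := fun k => Nat.rec 0 (fun k ih => (step k ih).choose) k with hnn
  have hnnsucc : ∀ k, nn (k+1) = (step k (nn k)).choose := fun k => rfl
  have hmono : StrictMono nn :=
    strictMono_nat_of_lt_succ fun k => (step k (nn k)).choose_spec.1
  set τ : ℕ → Cantor → Cantor := fun k σ => ((step k (nn k)).choose_spec.2 σ).choose with hτ
  have τspec : ∀ k σ t, (∀ i, i < nn k → t i = σ i) →
      (∀ i, nn k ≤ i → i < nn (k+1) → t i = τ k σ i) → t ∉ F k :=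
    fun k σ => ((step k (nn k)).choose_spec.2 σ).choose_spec
  refine ⟨nn, hmono, fun A hA => ?_⟩
  by_contra hinf
  have hinf2 : Set.Infinite {k | Set.Ico (nn k) (nn (k+1)) ⊆ A} := hinf
  -- build B
  set Bk : ℕ → Cantor := BkAux nn τ A with hBk
  have hBksucc : ∀ k i, Bk (k+1) i =
      (if i < nn k then Bk k i
      else if i < nn (k+1) then
        (if Set.Ico (nn k) (nn (k+1)) ⊆ A then τ k (Bk k) i
         else decide (i ∈ A))
      else false) := fun k i => by
    rw [hBk]; rfl
  have hcoh : ∀ k l, k ≤ l → ∀ i, i < nn k → Bk l i = Bk k i := by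
    intro k l hkl
    induction l, hkl using Nat.le_induction with
    | base => intro i _; rfl
    | succ l hkl ih =>
      intro i hi
      rw [hBksucc, if_pos (lt_of_lt_of_le hi (hmono.monotone hkl)), ih i hi]
  have hnn0 : nn 0 = 0 := rfl
  set B : Cantor := fun i => Bk (i+1) i with hB
  have hBlow : ∀ k i, i < nn k → B i = Bk k i := by
    intro k i hi
    rcases le_total k (i+1) with h | h
    · exact hcoh k (i+1) h i hi
    · exact (hcoh (i+1) k h i (lt_of_lt_of_le (Nat.lt_succ_self i) (hmono.le_apply))).symm
  have hBint : ∀ k i, nn k ≤ i → i < nn (k+1) → B i =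
      (if Set.Ico (nn k) (nn (k+1)) ⊆ A then τ k (Bk k) i else decide (i ∈ A)) := by
    intro k i h1 h2
    have : B i = Bk (k+1) i := hBlow (k+1) i h2
    rw [this, hBksucc, if_neg (by omega), if_pos h2]
  -- every i lies in some interval
  have hcover : ∀ i : ℕ, ∃ k, nn k ≤ i ∧ i < nn (k+1) := by
    intro i
    have hex : ∃ k, i < nn k :=
      ⟨i+1, lt_of_lt_of_le (Nat.lt_succ_self i) hmono.le_apply⟩
    have hk0 : Nat.find hex ≠ 0 := by
      intro h
      have := Nat.find_spec hex
      rw [h, hnn0] at this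
      omega
    refine ⟨Nat.find hex - 1, ?_, ?_⟩
    · have := Nat.find_min hex (m := Nat.find hex - 1) (by omega)
      omega
    · have := Nat.find_spec hex
      have h1 : Nat.find hex - 1 + 1 = Nat.find hex := by omega
      rw [h1]
      exact this
  -- B's support is a subset of A
  have hBsub : {i | B i = true} ⊆ A := by
    intro i hBi
    obtain ⟨k, h1, h2⟩ := hcover i
    have := hBint k i h1 h2
    simp only [Set.mem_setOf_eq] at hBi
    rw [this] at hBi
    by_cases hgood : Set.Ico (nn k) (nn (k+1)) ⊆ A
    · exact hgood ⟨h1, h2⟩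
    · rw [if_neg hgood] at hBi
      exact of_decide_eq_true hBi
  have hBJ : B ∈ JJ I := hSub _ A hBsub hA
  obtain ⟨s₀, hs₀S, hBs₀⟩ := hJS hBJ
  obtain ⟨i₀, hi₀⟩ := (hf ▸ Set.mem_insert_of_mem ∅ hs₀S : s₀ ∈ Set.range f)
  obtain ⟨k, hkG, hki₀⟩ := hinf2.exists_gt i₀
  have hBF : B ∈ F k := by
    have h1 : B ∈ closure (f i₀) := subset_closure (by rw [hi₀]; exact hBs₀)
    exact Set.mem_biUnion (Finset.mem_range.mpr (by omega : i₀ < k + 1)) h1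
  refine τspec k (Bk k) B (fun i hi => hBlow k i hi) ?_ hBF
  intro i h1 h2
  rw [hBint k i h1 h2]
  exact if_pos hkG

end EIdeal

namespace EIdeal
section Density
variable {X : Type*} [NormedAddCommGroup X]

lemma lower_norm_add (Q y : X) : ‖y‖ - ‖Q‖ ≤ ‖Q + y‖ := by
  have h1 : ‖y‖ = ‖(Q + y) - Q‖ := by congr 1; abel
  have h2 : ‖(Q + y) - Q‖ ≤ ‖Q + y‖ + ‖Q‖ := norm_sub_le _ _
  linarith

lemma big_density (x : ℕ → X) (hbig : Tendsto (fun m => ‖x m‖) atTop atTop)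
    (M : ℝ) (nn : ℕ → ℕ) (hnn : StrictMono nn) (j N : ℕ)
    (s₀ : ℕ → ℕ) (hs₀ : StrictMono s₀) :
    ∃ s : ℕ → ℕ, StrictMono s ∧ (∀ i, i < N → s i = s₀ i) ∧
      ∃ i, j ≤ i ∧ ∀ m, nn i ≤ m → m < nn (i+1) →
        M < ‖∑ p ∈ Finset.range m, x (s p)‖ := by
  have hpick : ∀ q : ℕ × X, ∃ m, q.1 < m ∧ 2*‖q.2‖ + M + 1 ≤ ‖x m‖ := by
    intro q
    have h1 := Filter.tendsto_atTop.mp hbig (2*‖q.2‖ + M + 1)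
    obtain ⟨m, hm1, hm2⟩ := (h1.and (Filter.eventually_ge_atTop (q.1+1))).exists
    exact ⟨m, by omega, hm1⟩
  set step : ℕ × X → ℕ × X := fun q => ((hpick q).choose, q.2 + x (hpick q).choose)
    with hstepdef
  have hstep1 : ∀ q, q.1 < (step q).1 := fun q => (hpick q).choose_spec.1
  have hstep2 : ∀ q, (step q).2 = q.2 + x ((step q).1) := fun q => rfl
  have hstepnorm : ∀ q, M < ‖(step q).2‖ := by
    intro q
    have h2 := (hpick q).choose_spec.2
    have h3 := lower_norm_add q.2 (x ((step q).1))
    have h4 : (0:ℝ) ≤ ‖q.2‖ := norm_nonneg _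
    rw [hstep2 q]
    have h5 : 2*‖q.2‖ + M + 1 ≤ ‖x ((step q).1)‖ := h2
    linarith
  set start := step (s₀ N, ∑ p ∈ Finset.range N, x (s₀ p)) with hstartdef
  set seq : ℕ → ℕ × X := fun t => step^[t] start with hseqdef
  have hseqS : ∀ t, seq (t+1) = step (seq t) := fun t =>
    Function.iterate_succ_apply' step t start
  set s : ℕ → ℕ := fun p => if p < N then s₀ p else (seq (p - N)).1 with hsdef
  have hsagree : ∀ i, i < N → s i = s₀ i := fun i hi => if_pos hi
  have hsbeyond : ∀ p, N ≤ p → s p = (seq (p-N)).1 := fun p hp => if_neg (by omega)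
  have hsmono : StrictMono s := by
    apply strictMono_nat_of_lt_succ
    intro p
    rcases lt_trichotomy (p+1) N with h|h|h
    · rw [hsagree p (by omega), hsagree (p+1) h]; exact hs₀ (Nat.lt_succ_self p)
    · rw [hsagree p (by omega), hsbeyond (p+1) (by omega)]
      have h0 : p + 1 - N = 0 := by omega
      rw [h0]
      have h1 : s₀ p < s₀ N := hs₀ (by omega)
      have h2 : s₀ N < (seq 0).1 := hstep1 (s₀ N, ∑ p ∈ Finset.range N, x (s₀ p))
      omega
    · have h' : N ≤ p := by omega
      rw [hsbeyond p h', hsbeyond (p+1) (by omega)]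
      have he : p + 1 - N = (p - N) + 1 := by omega
      rw [he, hseqS]
      exact hstep1 (seq (p-N))
  have hsum : ∀ t, ∑ p ∈ Finset.range (N+t+1), x (s p) = (seq t).2 := by
    intro t
    induction t with
    | zero =>
      rw [Nat.add_zero, Finset.sum_range_succ]
      have h1 : ∑ p ∈ Finset.range N, x (s p) = ∑ p ∈ Finset.range N, x (s₀ p) :=
        Finset.sum_congr rfl (fun p hp => by rw [hsagree p (Finset.mem_range.mp hp)])
      have h2 : s N = (seq 0).1 := by rw [hsbeyond N le_rfl, Nat.sub_self]
      rw [h1, h2]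
      exact (hstep2 (s₀ N, ∑ p ∈ Finset.range N, x (s₀ p))).symm
    | succ t ih =>
      have he : N + (t+1) + 1 = (N + t + 1) + 1 := by omega
      rw [he, Finset.sum_range_succ, ih]
      have h2 : s (N+t+1) = (seq (t+1)).1 := by
        have h3 : N + t + 1 - N = t + 1 := by omega
        rw [hsbeyond _ (by omega), h3]
      rw [h2, hseqS]
  have hnorm : ∀ t, M < ‖(seq t).2‖ := by
    intro t
    cases t with
    | zero => exact hstepnorm _
    | succ t => rw [hseqS]; exact hstepnorm _
  refine ⟨s, hsmono, hsagree, max j (N+1), le_max_left _ _, ?_⟩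
  intro m hm1 hm2
  have hmN : N + 1 ≤ m := by
    have h1 : N + 1 ≤ max j (N+1) := le_max_right _ _
    have h2 : max j (N+1) ≤ nn (max j (N+1)) := hnn.le_apply
    omega
  have he : m = N + (m - N - 1) + 1 := by omega
  rw [he, hsum]
  exact hnorm _

end Density
end EIdeal

namespace EIdeal
section Density2
variable {X : Type*} [NormedAddCommGroup X]

lemma small_or_big (x : ℕ → X)
    (hliminf : Filter.liminf (fun n => ‖x n‖) atTop = 0) :
    (∀ ε : ℝ, 0 < ε → ∀ v : ℕ, ∃ m, v < m ∧ ‖x m‖ < ε) ∨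
      Tendsto (fun m => ‖x m‖) atTop atTop := by
  by_cases h : ∀ ε : ℝ, 0 < ε → ∃ᶠ m in atTop, ‖x m‖ < ε
  · left
    intro ε hε v
    obtain ⟨m, hm1, hm2⟩ := Filter.frequently_atTop.mp (h ε hε) (v+1)
    exact ⟨m, by omega, hm2⟩
  · right
    push_neg at h
    obtain ⟨ε, hε, hev⟩ := h
    have hev' : ∀ᶠ m in atTop, ε ≤ ‖x m‖ := hev
    have hT : ¬ BddAbove {a : ℝ | ∀ᶠ m in atTop, a ≤ ‖x m‖} := by
      intro hbdd
      have hmem : ε ∈ {a : ℝ | ∀ᶠ m in atTop, a ≤ ‖x m‖} := hev'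
      have := le_csSup hbdd hmem
      rw [← Filter.liminf_eq, hliminf] at this
      linarith
    rw [Filter.tendsto_atTop]
    intro R
    obtain ⟨a, ha, hRa⟩ := not_bddAbove_iff.mp hT R
    exact ha.mono (fun m hm => le_of_lt (lt_of_lt_of_le hRa hm))

lemma blocks (x : ℕ → X) (s' : ℕ → ℕ)
    (hub : ¬ ∃ M : ℝ, ∀ n : ℕ, ‖∑ i ∈ Finset.range n, x (s' i)‖ ≤ M) :
    ∀ a : ℕ, ∀ R : ℝ, 0 ≤ R → ∃ b, a < b ∧
      R < ‖∑ k ∈ Finset.Ico a b, x (s' k)‖ := by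
  push_neg at hub
  intro a R hR
  set T : ℝ := ∑ k ∈ Finset.range a, ‖x (s' k)‖ with hT
  have hT0 : (0:ℝ) ≤ T := Finset.sum_nonneg (fun k _ => norm_nonneg _)
  set Sa : ℝ := ‖∑ k ∈ Finset.range a, x (s' k)‖ with hSa
  have hSa0 : (0:ℝ) ≤ Sa := norm_nonneg _
  obtain ⟨b, hb⟩ := hub (R + Sa + T)
  have hab : a < b := by
    by_contra hba
    push_neg at hba
    have h1 : ‖∑ k ∈ Finset.range b, x (s' k)‖ ≤ ∑ k ∈ Finset.range b, ‖x (s' k)‖ :=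
      norm_sum_le _ _
    have h2 : ∑ k ∈ Finset.range b, ‖x (s' k)‖ ≤ T :=
      Finset.sum_le_sum_of_subset_of_nonneg
        (Finset.range_subset_range.mpr hba) (fun k _ _ => norm_nonneg _)
    linarith
  refine ⟨b, hab, ?_⟩
  rw [Finset.sum_Ico_eq_sub _ (le_of_lt hab)]
  have h3 : ‖∑ k ∈ Finset.range b, x (s' k)‖ - Sa ≤
      ‖∑ k ∈ Finset.range b, x (s' k) - ∑ k ∈ Finset.range a, x (s' k)‖ := by
    have := norm_sub_norm_le (∑ k ∈ Finset.range b, x (s' k))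
      (∑ k ∈ Finset.range a, x (s' k))
    linarith [this]
  linarith

lemma small_density (x : ℕ → X)
    (hsm : ∀ ε : ℝ, 0 < ε → ∀ v : ℕ, ∃ m, v < m ∧ ‖x m‖ < ε)
    (s' : ℕ → ℕ) (hs' : StrictMono s')
    (hbl : ∀ a : ℕ, ∀ R : ℝ, 0 ≤ R → ∃ b, a < b ∧
      R < ‖∑ k ∈ Finset.Ico a b, x (s' k)‖)
    (M : ℝ) (hM : 0 ≤ M) (nn : ℕ → ℕ) (hnn : StrictMono nn) (j N : ℕ)
    (s₀ : ℕ → ℕ) (hs₀ : StrictMono s₀) :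
    ∃ s : ℕ → ℕ, StrictMono s ∧ (∀ i, i < N → s i = s₀ i) ∧
      ∃ i, j ≤ i ∧ ∀ m, nn i ≤ m → m < nn (i+1) →
        M < ‖∑ p ∈ Finset.range m, x (s p)‖ := by
  set P : X := ∑ p ∈ Finset.range N, x (s₀ p) with hP
  set a : ℕ := s₀ N + 1 with ha
  have hs'a : s₀ N < s' a := lt_of_lt_of_le (Nat.lt_succ_self _) hs'.le_apply
  obtain ⟨b, hab, hblock⟩ := hbl a (M + 1 + ‖P‖) (by positivity)
  set N' : ℕ := N + (b - a) with hN'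
  have hNN' : N < N' := by omega
  set i : ℕ := max j N' with hi
  have hiN' : N' ≤ nn i := le_trans (le_max_right _ _) hnn.le_apply
  set L : ℕ := nn (i+1) with hL
  set c : ℕ := L - N' with hc
  set δ : ℝ := 1 / (c+1) with hδ
  have hδ0 : (0:ℝ) < δ := by positivity
  -- the tail of small elements
  set stp : ℕ → ℕ := fun v => (hsm δ hδ0 v).choose with hstp
  have hstp1 : ∀ v, v < stp v := fun v => (hsm δ hδ0 v).choose_spec.1
  have hstp2 : ∀ v, ‖x (stp v)‖ < δ := fun v => (hsm δ hδ0 v).choose_spec.2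
  set tail : ℕ → ℕ := fun t => stp^[t+1] (s' b) with htail
  have htail0 : tail 0 = stp (s' b) := rfl
  have htailS : ∀ t, tail (t+1) = stp (tail t) := fun t =>
    Function.iterate_succ_apply' stp (t+1) (s' b)
  have htailmono : ∀ t, tail t < tail (t+1) := fun t => by
    rw [htailS]; exact hstp1 _
  have htailsmall : ∀ t, ‖x (tail t)‖ < δ := by
    intro t
    cases t with
    | zero => exact hstp2 _
    | succ t => rw [htailS]; exact hstp2 _
  set s : ℕ → ℕ := fun p =>
    if p < N then s₀ p else if p < N' then s' (a + (p - N)) else tail (p - N') with hs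
  have hs1 : ∀ p, p < N → s p = s₀ p := fun p hp => if_pos hp
  have hs2 : ∀ p, N ≤ p → p < N' → s p = s' (a + (p - N)) := fun p hp1 hp2 => by
    rw [hs]; simp only [if_neg (by omega : ¬ p < N), if_pos hp2]
  have hs3 : ∀ p, N' ≤ p → s p = tail (p - N') := fun p hp => by
    rw [hs]; simp only [if_neg (by omega : ¬ p < N), if_neg (by omega : ¬ p < N')]
  have hsmono : StrictMono s := by
    apply strictMono_nat_of_lt_succ
    intro p
    rcases lt_trichotomy (p+1) N with h|h|h
    · rw [hs1 p (by omega), hs1 (p+1) h]; exact hs₀ (Nat.lt_succ_self p)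
    · rw [hs1 p (by omega), hs2 (p+1) (by omega) (by omega)]
      have : p + 1 - N = 0 := by omega
      rw [this, Nat.add_zero]
      exact lt_of_lt_of_le (lt_of_le_of_lt (hs₀.monotone (by omega : p ≤ N)) hs'a) le_rfl
    · have hNp : N ≤ p := by omega
      rcases lt_trichotomy (p+1) N' with h'|h'|h'
      · rw [hs2 p hNp (by omega), hs2 (p+1) (by omega) h']
        apply hs'
        omega
      · rw [hs2 p hNp (by omega), hs3 (p+1) (by omega)]
        have he1 : p + 1 - N' = 0 := by omega
        rw [he1, htail0]
        have he2 : a + (p - N) < b := by omega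
        calc s' (a + (p - N)) ≤ s' b := hs'.monotone (by omega)
          _ < stp (s' b) := hstp1 _
      · rcases Nat.lt_or_ge p N' with h''|h''
        · omega
        · rw [hs3 p h'', hs3 (p+1) (by omega)]
          have he : p + 1 - N' = (p - N') + 1 := by omega
          rw [he]
          exact htailmono _
  -- partial sums
  have hsumN : ∑ p ∈ Finset.range N, x (s p) = P :=
    Finset.sum_congr rfl (fun p hp => by rw [hs1 p (Finset.mem_range.mp hp)])
  set Q : X := P + ∑ k ∈ Finset.Ico a b, x (s' k) with hQ
  have hsumN' : ∑ p ∈ Finset.range N', x (s p) = Q := by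
    rw [Finset.range_eq_Ico, ← Finset.sum_Ico_consecutive _ (Nat.zero_le N) (le_of_lt hNN'),
      ← Finset.range_eq_Ico, hsumN]
    congr 1
    rw [Finset.sum_Ico_eq_sum_range]
    rw [Finset.sum_Ico_eq_sum_range (fun k => x (s' k)) a b]
    have hba : N' - N = b - a := by omega
    rw [hba]
    apply Finset.sum_congr rfl
    intro t ht
    have ht' : t < b - a := Finset.mem_range.mp ht
    have he3 : N + t - N = t := by omega
    rw [hs2 (N + t) (by omega) (by omega), he3]
  have hQnorm : M + 1 < ‖Q‖ := by
    have := lower_norm_add P (∑ k ∈ Finset.Ico a b, x (s' k))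
    rw [← hQ] at this
    linarith
  have hsumr : ∀ r, r ≤ c → M < ‖∑ p ∈ Finset.range (N' + r), x (s p)‖ := by
    intro r hr
    have hsplit : ∑ p ∈ Finset.range (N' + r), x (s p)
        = Q + ∑ t ∈ Finset.range r, x (tail t) := by
      rw [Finset.range_eq_Ico,
        ← Finset.sum_Ico_consecutive _ (Nat.zero_le N') (by omega : N' ≤ N' + r),
        ← Finset.range_eq_Ico, hsumN']
      congr 1
      rw [Finset.sum_Ico_eq_sum_range]
      have he : N' + r - N' = r := by omega
      rw [he]
      apply Finset.sum_congr rfl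
      intro t ht
      have he2 : N' + t - N' = t := by omega
      rw [hs3 (N' + t) (by omega), he2]
    rw [hsplit]
    have hsmallsum : ‖∑ t ∈ Finset.range r, x (tail t)‖ ≤ r * δ := by
      calc ‖∑ t ∈ Finset.range r, x (tail t)‖ ≤ ∑ t ∈ Finset.range r, ‖x (tail t)‖ :=
            norm_sum_le _ _
        _ ≤ ∑ t ∈ Finset.range r, δ :=
            Finset.sum_le_sum (fun t _ => le_of_lt (htailsmall t))
        _ = r * δ := by rw [Finset.sum_const, Finset.card_range]; ring
    have hrδ : (r:ℝ) * δ < 1 := by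
      have hrc : (r:ℝ) ≤ (c:ℝ) := by exact_mod_cast hr
      have h1 : (r:ℝ) * δ ≤ (c:ℝ) * δ := mul_le_mul_of_nonneg_right hrc (le_of_lt hδ0)
      have h2 : (c:ℝ) * δ < 1 := by
        rw [hδ, mul_one_div, div_lt_one (by positivity : (0:ℝ) < (c:ℝ)+1)]
        linarith
      linarith
    have h2 : ‖Q‖ - ‖∑ t ∈ Finset.range r, x (tail t)‖ ≤
        ‖Q + ∑ t ∈ Finset.range r, x (tail t)‖ := by
      rw [add_comm]
      exact lower_norm_add _ _
    linarith
  refine ⟨s, hsmono, hs1, i, le_max_left _ _, ?_⟩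
  intro m hm1 hm2
  have hm3 : N' ≤ m := le_trans hiN' hm1
  have he : m = N' + (m - N') := by omega
  rw [he]
  exact hsumr (m - N') (by omega)

end Density2
end EIdeal

namespace EIdeal

lemma mem_interior_cyl {F : Set IncSeq} {s₀ : IncSeq} (h : s₀ ∈ interior F) :
    ∃ N, ∀ s : IncSeq, (∀ i, i < N → s.1 i = s₀.1 i) → s ∈ F := by
  obtain ⟨V, hV, hVF⟩ := isOpen_induced_iff.mp (isOpen_interior (s := F))
  have hs₀V : s₀.1 ∈ V := by
    rw [← hVF] at h
    exact h
  obtain ⟨K, u, hu, hKu⟩ := isOpen_pi_iff.mp hV s₀.1 hs₀V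
  refine ⟨K.sup id + 1, fun s hs => ?_⟩
  have h1 : s.1 ∈ V := by
    apply hKu
    intro a ha
    rw [hs a (Nat.lt_succ_of_le (Finset.le_sup (f := id) ha))]
    exact (hu a ha).2
  have h2 : s ∈ interior F := by
    rw [← hVF]
    exact h1
  exact interior_subset h2

lemma sublevel_closed {X : Type*} [NormedAddCommGroup X] (x : ℕ → X) (m : ℕ) (M : ℝ) :
    IsClosed {s : IncSeq | ‖∑ p ∈ Finset.range m, x (s.1 p)‖ ≤ M} := by
  have hc : Continuous fun s : IncSeq => ‖∑ p ∈ Finset.range m, x (s.1 p)‖ := by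
    apply Continuous.norm
    apply continuous_finset_sum
    intro p _
    exact (continuous_of_discreteTopology (f := x)).comp
      ((continuous_apply p).comp continuous_subtype_val)
  exact isClosed_le hc continuous_const

end EIdeal

end EIdealAux

theorem E_ideal_meager
    {X : Type*} [NormedAddCommGroup X] [NormedSpace ℝ X] [CompleteSpace X]
    (x : ℕ → X)
    (hliminf : Filter.liminf (fun n => ‖x n‖) atTop = 0)
    (I : Set (Set ℕ))
    (hEmpty : ∅ ∈ I)
    (hUnion : ∀ A B : Set ℕ, A ∈ I → B ∈ I → A ∪ B ∈ I)
    (hSub : ∀ A B : Set ℕ, A ⊆ B → B ∈ I → A ∈ I)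
    (hProper : (Set.univ : Set ℕ) ∉ I)
    (hFin : ∀ A : Set ℕ, A.Finite → A ∈ I)
    (hBP : IdealHasBaireProperty I)
    (s' : ℕ → ℕ) (hs' : StrictMono s')
    (hub : ¬ ∃ M : ℝ, ∀ n : ℕ, ‖∑ i ∈ Finset.range n, x (s' i)‖ ≤ M) :
    IsMeagre {s : IncSeq |
      ∃ M > (0 : ℝ), {n : ℕ | M < ‖∑ i ∈ Finset.range n, x (s.1 i)‖} ∈ I} := by
  classical
  have hJm : IsMeagre (EIdeal.JJ I) :=
    EIdeal.JJ_meagre hUnion hSub hProper hFin hBP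
  obtain ⟨nn, hnn, hint⟩ := EIdeal.exists_intervals hSub hJm
  set FF : ℕ → ℕ → Set IncSeq := fun M j =>
    {s : IncSeq | ∀ i, j ≤ i → ∃ m, nn i ≤ m ∧ m < nn (i+1) ∧
      ‖∑ p ∈ Finset.range m, x (s.1 p)‖ ≤ (M:ℝ)} with hFF
  have hsub : {s : IncSeq |
      ∃ M > (0 : ℝ), {n : ℕ | M < ‖∑ i ∈ Finset.range n, x (s.1 i)‖} ∈ I} ⊆
      ⋃ (M : ℕ), ⋃ (j : ℕ), FF M j := by
    intro s hs
    obtain ⟨M₀, hM₀, hI⟩ := hs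
    set A' : Set ℕ := {n | (⌈M₀⌉₊ : ℝ) < ‖∑ i ∈ Finset.range n, x (s.1 i)‖} with hA'def
    have hA' : A' ∈ I := by
      refine hSub A' _ ?_ hI
      intro n hn
      exact lt_of_lt_of_le (lt_of_le_of_lt (Nat.le_ceil M₀) hn) le_rfl
    have hfin := hint A' hA'
    obtain ⟨jb, hjb⟩ := hfin.bddAbove
    refine Set.mem_iUnion.mpr ⟨⌈M₀⌉₊, Set.mem_iUnion.mpr ⟨jb + 1, ?_⟩⟩
    intro i hi
    have hnotsub : ¬ (Set.Ico (nn i) (nn (i+1)) ⊆ A') := by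
      intro hcon
      have := hjb hcon
      omega
    obtain ⟨m, hmIco, hmA⟩ := Set.not_subset.mp hnotsub
    exact ⟨m, hmIco.1, hmIco.2, not_lt.mp hmA⟩
  refine IsMeagre.mono (hts := hsub) (hs := ?_)
  apply isMeagre_iUnion
  intro M
  apply isMeagre_iUnion
  intro j
  have hclosed : IsClosed (FF M j) := by
    have heq : FF M j = ⋂ (i : ℕ), ⋂ (_ : j ≤ i),
        ⋃ m ∈ (↑(Finset.Ico (nn i) (nn (i+1))) : Set ℕ),
          {s : IncSeq | ‖∑ p ∈ Finset.range m, x (s.1 p)‖ ≤ (M:ℝ)} := by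
      ext s
      simp only [hFF, Set.mem_setOf_eq, Set.mem_iInter, Set.mem_iUnion,
        Finset.coe_Ico, Set.mem_Ico, exists_prop]
      constructor
      · intro h i hi
        obtain ⟨m, h1, h2, h3⟩ := h i hi
        exact ⟨m, ⟨h1, h2⟩, h3⟩
      · intro h i hi
        obtain ⟨m, ⟨h1, h2⟩, h3⟩ := h i hi
        exact ⟨m, h1, h2, h3⟩
    rw [heq]
    refine isClosed_iInter fun i => isClosed_iInter fun _ => ?_
    exact Set.Finite.isClosed_biUnion (Finset.finite_toSet _)
      (fun m _ => EIdeal.sublevel_closed x m (M:ℝ))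
  have hint_empty : interior (FF M j) = ∅ := by
    rw [Set.eq_empty_iff_forall_notMem]
    intro s₀ hs₀
    obtain ⟨N, hN⟩ := EIdeal.mem_interior_cyl hs₀
    have hgoal : ∃ s : ℕ → ℕ, StrictMono s ∧ (∀ i, i < N → s i = s₀.1 i) ∧
        ∃ i, j ≤ i ∧ ∀ m, nn i ≤ m → m < nn (i+1) →
          (M:ℝ) < ‖∑ p ∈ Finset.range m, x (s p)‖ := by
      rcases EIdeal.small_or_big x hliminf with hsm | hbig
      · exact EIdeal.small_density x hsm s' hs' (EIdeal.blocks x s' hub) (M:ℝ)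
          (Nat.cast_nonneg M) nn hnn j N s₀.1 s₀.2
      · exact EIdeal.big_density x hbig (M:ℝ) nn hnn j N s₀.1 s₀.2
    obtain ⟨s, hsmono, hagree, i, hij, hgt⟩ := hgoal
    have hmem := hN ⟨s, hsmono⟩ hagree
    obtain ⟨m, h1, h2, h3⟩ := hmem i hij
    exact absurd h3 (not_le.mpr (hgt m h1 h2))
  rw [IsMeagre]
  refine residual_of_dense_open hclosed.isOpen_compl ?_
  exact interior_eq_empty_iff_dense_compl.mp hint_empty
end

section
/- Let X be a Banach space, (x_n) a sequence in X with liminf ‖x_n‖ = 0, and I an ideal on ℕ with the Baire property. If there exists a bijection p' : ℕ → ℕ for which the partial sums of ∑ x_{p'(n)} are unbounded, then the set F(I) = {p ∈ P : (∑_{i=1}^n x_{p(i)})_n is I-bounded} is meager in P. -/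
open Filter

open Topology Set

lemma basic_nhds {α : Type*} [TopologicalSpace α] [DiscreteTopology α]
    {K : Set (ℕ → α)} (hK : IsOpen K) {t : ℕ → α} (ht : t ∈ K) :
    ∃ d : ℕ, ∀ s : ℕ → α, (∀ i < d, s i = t i) → s ∈ K := by
  classical
  rcases isOpen_pi_iff.1 hK t ht with ⟨I, u, hu, hsub⟩
  refine ⟨(I.sup id) + 1, fun s hs => hsub ?_⟩
  intro i hi
  rw [hs i (Nat.lt_succ_of_le (Finset.le_sup (f := id) hi))]
  exact (hu i hi).2

lemma escape_step {K : Set (ℕ → Bool)} (hd : Dense Kᶜ) (hcl : IsClosed K)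
    (v : ℕ → Bool) (c : ℕ) :
    ∃ d, c ≤ d ∧ ∃ w : ℕ → Bool, (∀ i < c, w i = v i) ∧
      ∀ t : ℕ → Bool, (∀ i < d, t i = w i) → t ∉ K := by
  have hU : IsOpen {t : ℕ → Bool | ∀ i < c, t i = v i} := by
    have : {t : ℕ → Bool | ∀ i < c, t i = v i}
        = ⋂ i ∈ Finset.range c, {t : ℕ → Bool | t i = v i} := by
      ext t; simp
    rw [this]
    refine isOpen_biInter_finset fun i _ => ?_
    have : {t : ℕ → Bool | t i = v i} = (fun t : ℕ → Bool => t i) ⁻¹' {v i} := rfl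
    rw [this]
    exact IsOpen.preimage (continuous_apply i) (isOpen_discrete ({v i} : Set Bool))
  obtain ⟨t, htK, htU⟩ := hd.exists_mem_open hU ⟨v, fun i _ => rfl⟩
  obtain ⟨d0, hd0⟩ := basic_nhds hcl.isOpen_compl htK
  refine ⟨max c d0, le_max_left _ _, t, fun i hi => htU i hi, fun s hs hsK => ?_⟩
  exact hd0 s (fun i hi => hs i (lt_of_lt_of_le hi (le_max_right _ _))) hsK

lemma escape {K : Set (ℕ → Bool)} (hcl : IsClosed K) (hnwd : Dense Kᶜ) (a : ℕ) :
    ∃ b, a < b ∧ ∃ τ : ℕ → Bool,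
      ∀ t : ℕ → Bool, (∀ i, a ≤ i → i < b → t i = τ i) → t ∉ K := by
  classical
  suffices h : ∀ L : List (Fin a → Bool), ∃ b, a < b ∧ ∃ τ : ℕ → Bool,
      ∀ σ ∈ L, ∀ t : ℕ → Bool, (∀ i : Fin a, t i = σ i) →
        (∀ i, a ≤ i → i < b → t i = τ i) → t ∉ K by
    obtain ⟨b, hab, τ, hτ⟩ := h (Finset.univ.toList)
    exact ⟨b, hab, τ, fun t ht => hτ (fun i : Fin a => t i)
      (Finset.mem_toList.2 (Finset.mem_univ _)) t (fun i => rfl) ht⟩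
  intro L
  induction L with
  | nil => exact ⟨a + 1, Nat.lt_succ_self a, fun _ => false, by simp⟩
  | cons σ L ih =>
    obtain ⟨b, hab, τ, hτ⟩ := ih
    obtain ⟨d, hbd, w, hw, hwK⟩ :=
      escape_step hnwd hcl (fun i => if h : i < a then σ ⟨i, h⟩ else τ i) b
    refine ⟨d, lt_of_lt_of_le hab hbd, w, ?_⟩
    intro σ' hσ' t htσ' hta
    rcases List.mem_cons.1 hσ' with h | h
    · subst h
      refine hwK t (fun i hi => ?_)
      by_cases hia : i < a
      · rw [htσ' ⟨i, hia⟩, hw i (lt_of_lt_of_le hia hab.le), dif_pos hia]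
      · exact hta i (le_of_not_gt hia) hi
    · refine hτ σ' h t htσ' (fun i hai hib => ?_)
      rw [hta i hai (lt_of_lt_of_le hib hbd), hw i hib, dif_neg (not_lt.2 hai)]

section Ideal

variable {I : Set (Set ℕ)}
  (hUnion : ∀ A B : Set ℕ, A ∈ I → B ∈ I → A ∪ B ∈ I)
  (hSub : ∀ A B : Set ℕ, A ⊆ B → B ∈ I → A ∈ I)
  (hFin : ∀ A : Set ℕ, A.Finite → A ∈ I)

include hUnion hSub hFin in
lemma I_inv {s t : ℕ → Bool} (hfin : {n | s n ≠ t n}.Finite)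
    (hs : {n | s n = true} ∈ I) : {n | t n = true} ∈ I := by
  have hsub : {n | t n = true} ⊆ {n | s n = true} ∪ {n | s n ≠ t n} := by
    intro n hn
    by_cases h : s n = true
    · exact Or.inl h
    · exact Or.inr (by simp only [mem_setOf_eq] at hn ⊢; rw [hn]; simpa using h)
  exact hSub _ _ hsub (hUnion _ _ hs (hFin _ hfin))

include hUnion hSub hFin in
lemma Iset_meagre (hProper : (Set.univ : Set ℕ) ∉ I)
    (hBP : BaireMeasurableSet {t : ℕ → Bool | {n : ℕ | t n = true} ∈ I}) :
    IsMeagre {t : ℕ → Bool | {n : ℕ | t n = true} ∈ I} := by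
  classical
  set S := {t : ℕ → Bool | {n : ℕ | t n = true} ∈ I} with hSdef
  obtain ⟨u, huo, hSu⟩ := hBP.residualEq_isOpen
  rcases eq_empty_or_nonempty u with rfl | ⟨t0, ht0⟩
  · rw [IsMeagre]
    filter_upwards [hSu] with t ht
    intro hts
    change S t at hts
    rw [ht] at hts
    exact hts
  · exfalso
    obtain ⟨d, hd⟩ := basic_nhds huo ht0
    have hBS : IsMeagre ({t : ℕ → Bool | ∀ i < d, t i = t0 i} \ S) := by
      have h1 : IsMeagre (u \ S) := by
        rw [IsMeagre]
        filter_upwards [hSu] with t ht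
        intro hts
        rcases hts with ⟨htu, htS⟩
        change ¬ S t at htS
        rw [ht] at htS
        exact htS htu
      exact IsMeagre.mono (fun t (ht : t ∈ {t : ℕ → Bool | ∀ i < d, t i = t0 i} \ S) => (⟨hd t ht.1, ht.2⟩ : t ∈ u \ S)) h1
    have key : ∀ σ : Fin d → Bool,
        IsMeagre ({t : ℕ → Bool | ∀ i : Fin d, t i = σ i} \ S) := by
      intro σ
      set w : ℕ → Bool := fun i => if h : i < d then xor (σ ⟨i, h⟩) (t0 i) else false with hw
      set φ : (ℕ → Bool) → (ℕ → Bool) := fun t i => xor (w i) (t i) with hφ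
      have hφc : Continuous φ := continuous_pi fun i =>
        (continuous_of_discreteTopology (f := fun b : Bool => xor (w i) b)).comp
          (continuous_apply i)
      have hφinv : Function.Involutive φ := by
        intro t; funext i; simp [hφ]
      have hφo : IsOpenMap φ :=
        Homeomorph.isOpenMap ⟨⟨φ, φ, hφinv.leftInverse, hφinv.rightInverse⟩, hφc, hφc⟩
      have hIinv : ∀ t : ℕ → Bool, φ t ∈ S → t ∈ S := by
        intro t ht
        have hfin : {n | φ t n ≠ t n}.Finite := by
          apply Set.Finite.subset (Set.finite_Iio d)
          intro n hn
          by_contra hnd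
          apply hn
          simp only [hφ, hw]
          rw [dif_neg (by simpa [Set.mem_Iio] using hnd)]
          simp
        exact I_inv hUnion hSub hFin hfin ht
      have hpre : {t : ℕ → Bool | ∀ i : Fin d, t i = σ i} \ S
          ⊆ φ ⁻¹' ({t : ℕ → Bool | ∀ i < d, t i = t0 i} \ S) := by
        intro t ht
        refine ⟨fun i hi => ?_, fun hc => ht.2 (hIinv t hc)⟩
        have := ht.1 ⟨i, hi⟩
        simp only [hφ, hw, dif_pos hi, this]
        cases σ ⟨i, hi⟩ <;> cases t0 i <;> rfl
      have hφt : Filter.Tendsto φ (residual _) (residual _) :=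
        tendsto_residual_of_isOpenMap hφc hφo
      have : IsMeagre (φ ⁻¹' ({t : ℕ → Bool | ∀ i < d, t i = t0 i} \ S)) := by
        rw [IsMeagre, ← Set.preimage_compl]
        exact hφt hBS
      exact this.mono hpre
    have hS : IsMeagre Sᶜ := by
      have hsub : Sᶜ ⊆ ⋃ σ : Fin d → Bool,
          ({t : ℕ → Bool | ∀ i : Fin d, t i = σ i} \ S) := by
        intro t ht
        exact mem_iUnion.2 ⟨fun i => t i, ⟨fun i => rfl, ht⟩⟩
      refine IsMeagre.mono hsub ?_
      rw [IsMeagre, Set.compl_iUnion]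
      exact countable_iInter_mem.mpr fun σ => key σ
    have hcomeager : S ∈ residual _ := by rwa [IsMeagre, compl_compl] at hS
    set c : (ℕ → Bool) → (ℕ → Bool) := fun t i => !(t i) with hc
    have hcc : Continuous c := continuous_pi fun i =>
      (continuous_of_discreteTopology (f := fun b : Bool => !b)).comp (continuous_apply i)
    have hcinv : Function.Involutive c := by intro t; funext i; simp [hc]
    have hco : IsOpenMap c :=
      Homeomorph.isOpenMap ⟨⟨c, c, hcinv.leftInverse, hcinv.rightInverse⟩, hcc, hcc⟩
    have h2 : c ⁻¹' S ∈ residual _ := tendsto_residual_of_isOpenMap hcc hco hcomeager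
    obtain ⟨t, htS, htS'⟩ :=
      (dense_of_mem_residual (Filter.inter_mem hcomeager h2)).nonempty
    apply hProper
    have hA : {n | t n = true} ∈ I := htS
    have hA' : {n | (!t n) = true} ∈ I := htS'
    have huniv : ({n | t n = true} ∪ {n | (!t n) = true}) = Set.univ := by
      ext n; cases h : t n <;> simp [h]
    rw [← huniv]
    exact hUnion _ _ hA hA'

end Ideal

lemma closed_nwd_union {X : Type*} [TopologicalSpace X] {s t : Set X}
    (hs : IsClosed s) (hsn : IsNowhereDense s) (ht : IsClosed t) (htn : IsNowhereDense t) :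
    IsClosed (s ∪ t) ∧ IsNowhereDense (s ∪ t) := by
  have h1 := isClosed_isNowhereDense_iff_compl.1 ⟨hs, hsn⟩
  have h2 := isClosed_isNowhereDense_iff_compl.1 ⟨ht, htn⟩
  rw [isClosed_isNowhereDense_iff_compl, Set.compl_union]
  exact ⟨h1.1.inter h2.1, h1.2.inter_of_isOpen_left h2.2 h1.1⟩

lemma exists_blocks {I : Set (Set ℕ)}
    (hUnion : ∀ A B : Set ℕ, A ∈ I → B ∈ I → A ∪ B ∈ I)
    (hSub : ∀ A B : Set ℕ, A ⊆ B → B ∈ I → A ∈ I)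
    (hFin : ∀ A : Set ℕ, A.Finite → A ∈ I)
    (hProper : (Set.univ : Set ℕ) ∉ I)
    (hBP : BaireMeasurableSet {t : ℕ → Bool | {n : ℕ | t n = true} ∈ I}) :
    ∃ E : ℕ → Finset ℕ, (∀ k, (E k).Nonempty) ∧
      (∀ k, ∀ i ∈ E k, ∀ j ∈ E (k + 1), i < j) ∧
      (∀ A : Set ℕ, A ∈ I → {k | ↑(E k) ⊆ A}.Finite) := by
  classical
  have hm := Iset_meagre hUnion hSub hFin hProper hBP
  obtain ⟨𝒮, h𝒮nwd, h𝒮c, h𝒮cov⟩ := isMeagre_iff_countable_union_isNowhereDense.1 hm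
  obtain ⟨f, hf⟩ := (h𝒮c.insert (∅ : Set (ℕ → Bool))).exists_eq_range
    (Set.insert_nonempty _ _)
  have hfnwd : ∀ j, IsNowhereDense (f j) := by
    intro j
    have : f j ∈ insert (∅ : Set (ℕ → Bool)) 𝒮 := hf ▸ Set.mem_range_self j
    rcases Set.mem_insert_iff.1 this with h | h
    · rw [h]; exact isNowhereDense_empty
    · exact h𝒮nwd _ h
  -- the increasing sequence of closed nowhere dense sets
  let K : ℕ → Set (ℕ → Bool) := fun k =>
    Nat.rec (closure (f 0)) (fun k Kk => Kk ∪ closure (f (k + 1))) k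
  have hK0 : K 0 = closure (f 0) := rfl
  have hKS : ∀ k, K (k + 1) = K k ∪ closure (f (k + 1)) := fun k => rfl
  have hKprop : ∀ k, IsClosed (K k) ∧ IsNowhereDense (K k) := by
    intro k
    induction k with
    | zero => exact ⟨isClosed_closure, (hfnwd 0).closure⟩
    | succ k ih =>
      rw [hKS]
      exact closed_nwd_union ih.1 ih.2 isClosed_closure ((hfnwd (k + 1)).closure)
  have hKmono : ∀ j k, j ≤ k → K j ⊆ K k := by
    intro j k hjk
    induction k with
    | zero => rw [Nat.le_zero.1 hjk]
    | succ k ih =>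
      rcases Nat.lt_succ_iff_lt_or_eq.1 (Nat.lt_succ_of_le hjk) with h | h
      · rw [hKS]; exact (ih (Nat.lt_succ_iff.1 h)).trans Set.subset_union_left
      · rw [h]
  have hfK : ∀ j, f j ⊆ K j := by
    intro j
    induction j with
    | zero => exact subset_closure
    | succ j _ => rw [hKS]; exact subset_closure.trans Set.subset_union_right
  have hcov : {t : ℕ → Bool | {n : ℕ | t n = true} ∈ I} ⊆ ⋃ k, K k := by
    intro t ht
    obtain ⟨s, hs𝒮, hts⟩ := h𝒮cov ht
    have : s ∈ insert (∅ : Set (ℕ → Bool)) 𝒮 := Set.mem_insert_of_mem _ hs𝒮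
    rw [hf] at this
    obtain ⟨j, rfl⟩ := this
    exact Set.mem_iUnion.2 ⟨j, hfK j hts⟩
  -- the recursion producing blocks
  have hesc : ∀ (k a : ℕ), ∃ b, a < b ∧ ∃ τ : ℕ → Bool,
      ∀ t : ℕ → Bool, (∀ i, a ≤ i → i < b → t i = τ i) → t ∉ K k := by
    intro k a
    have h := hKprop k
    have hdense : Dense (K k)ᶜ := (isClosed_isNowhereDense_iff_compl.1 ⟨h.1, h.2⟩).2
    exact escape h.1 hdense a
  let a : ℕ → ℕ := fun k => Nat.rec 0 (fun k ak => (hesc k ak).choose + 1) k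
  let b : ℕ → ℕ := fun k => (hesc k (a k)).choose
  let τ : ℕ → ℕ → Bool := fun k => (hesc k (a k)).choose_spec.2.choose
  have hτ : ∀ k, ∀ t : ℕ → Bool, (∀ i, a k ≤ i → i < b k → t i = τ k i) → t ∉ K k :=
    fun k => (hesc k (a k)).choose_spec.2.choose_spec
  have hab : ∀ k, a k < b k := fun k => (hesc k (a k)).choose_spec.1
  have hba : ∀ k, a (k + 1) = b k + 1 := fun k => rfl
  have hamono : StrictMono a := by
    apply strictMono_nat_of_lt_succ
    intro k
    rw [hba]
    exact Nat.lt_succ_of_lt (hab k)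
  set E : ℕ → Finset ℕ := fun k =>
    ((Finset.Ico (a k) (b k)).filter (fun i => τ k i = true)) ∪ {b k} with hE
  have hmemE : ∀ k i, i ∈ E k ↔ ((a k ≤ i ∧ i < b k ∧ τ k i = true) ∨ i = b k) := by
    intro k i
    simp [hE, Finset.mem_union, Finset.mem_filter, Finset.mem_Ico, and_assoc]
    exact or_comm
  refine ⟨E, fun k => ⟨b k, (hmemE k (b k)).2 (Or.inr rfl)⟩, ?_, ?_⟩
  · intro k i hi j hj
    have hi' : i ≤ b k := by
      rcases (hmemE k i).1 hi with h | h
      · exact h.2.1.le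
      · exact h.le
    have hj' : a (k + 1) ≤ j := by
      rcases (hmemE (k + 1) j).1 hj with h | h
      · exact h.1
      · exact h ▸ (hab (k + 1)).le
    calc i ≤ b k := hi'
      _ < b k + 1 := Nat.lt_succ_self _
      _ = a (k + 1) := (hba k).symm
      _ ≤ j := hj'
  · intro A hA
    by_contra hinf
    have hinf' : {k | (↑(E k) : Set ℕ) ⊆ A}.Infinite := hinf
    set A' : Set ℕ := {n | n ∈ A ∧ ∀ k, (↑(E k) : Set ℕ) ⊆ A → a k ≤ n → n < b k →
      τ k n = true} with hA'def
    have hA'I : A' ∈ I := hSub _ _ (fun n hn => hn.1) hA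
    set t' : ℕ → Bool := fun n => @ite Bool (n ∈ A') (Classical.propDecidable _) true false with ht'
    have ht'mem : {n | t' n = true} = A' := by
      ext n; simp [ht']
    have ht'S : t' ∈ {t : ℕ → Bool | {n : ℕ | t n = true} ∈ I} := by
      rw [Set.mem_setOf_eq, ht'mem]; exact hA'I
    obtain ⟨j, hj⟩ := Set.mem_iUnion.1 (hcov ht'S)
    obtain ⟨k, hkInf, hjk⟩ := hinf'.exists_gt j
    refine hτ k t' ?_ (hKmono j k hjk.le hj)
    intro i hai hib
    -- uniqueness of the block containing i
    have huniq : ∀ k', a k' ≤ i → i < b k' → k' = k := by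
      intro k' h1 h2
      by_contra hne
      rcases lt_or_gt_of_ne hne with h | h
      · have : b k' + 1 ≤ a k := by
          rw [← hba]
          exact hamono.le_iff_le.2 h
        omega
      · have : b k + 1 ≤ a k' := by
          rw [← hba]
          exact hamono.le_iff_le.2 h
        omega
    cases hτki : τ k i with
    | true =>
      have hiE : i ∈ E k := (hmemE k i).2 (Or.inl ⟨hai, hib, hτki⟩)
      have hiA : i ∈ A := hkInf (Finset.mem_coe.2 hiE)
      have hiA' : i ∈ A' := by
        refine ⟨hiA, fun k' hk' h1 h2 => ?_⟩
        rw [huniq k' h1 h2]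
        exact hτki
      simp only [ht']
      exact if_pos hiA'
    | false =>
      simp only [ht']
      rw [if_neg]
      intro hiA'
      have h2 := hiA'.2 k hkInf hai hib
      rw [hτki] at h2
      exact Bool.false_ne_true h2

lemma exists_bij_extendList (l : List ℕ) (hl : l.Nodup) :
    ∃ p : ℕ → ℕ, Function.Bijective p ∧ ∀ i (h : i < l.length), p i = l.get ⟨i, h⟩ := by
  classical
  set Q : ℕ → Prop := fun n => n ∉ l with hQ
  have hQinf : (setOf Q).Infinite := by
    have : (setOf Q) = {n : ℕ | n ∈ l}ᶜ := rfl
    rw [this]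
    exact l.finite_toSet.infinite_compl
  set p : ℕ → ℕ := fun i => if h : i < l.length then l.get ⟨i, h⟩
    else Nat.nth Q (i - l.length) with hp
  have hmem : ∀ i (h : ¬ i < l.length), p i ∉ l := by
    intro i h
    simp only [hp, dif_neg h]
    exact Nat.nth_mem_of_infinite hQinf _
  refine ⟨p, ⟨?_, ?_⟩, fun i h => by simp [hp, dif_pos h]⟩
  · intro i j hij
    by_cases hi : i < l.length <;> by_cases hj : j < l.length
    · simp only [hp, dif_pos hi, dif_pos hj] at hij
      have := List.nodup_iff_injective_get.1 hl hij
      simpa using congrArg Fin.val this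
    · refine absurd ?_ (hmem j hj)
      rw [← hij]
      simp only [hp, dif_pos hi]
      exact List.get_mem l _
    · refine absurd ?_ (hmem i hi)
      rw [hij]
      simp only [hp, dif_pos hj]
      exact List.get_mem l _
    · simp only [hp, dif_neg hi, dif_neg hj] at hij
      have := Nat.nth_injective hQinf hij
      omega
  · intro y
    by_cases hy : y ∈ l
    · obtain ⟨⟨i, hi⟩, hget⟩ := List.mem_iff_get.1 hy
      refine ⟨i, ?_⟩
      simp only [hp, dif_pos hi]
      exact hget
    · have : y ∈ Set.range (Nat.nth Q) := by
        rw [Nat.range_nth_of_infinite hQinf]; exact hy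
      obtain ⟨k, hk⟩ := this
      refine ⟨k + l.length, ?_⟩
      simp only [hp, dif_neg (by omega : ¬ k + l.length < l.length)]
      rw [(by omega : k + l.length - l.length = k), hk]

lemma nwd_isMeagre {X : Type*} [TopologicalSpace X] {s : Set X}
    (h : IsNowhereDense s) : IsMeagre s :=
  isMeagre_iff_countable_union_isNowhereDense.2
    ⟨{s}, by simpa using h, Set.countable_singleton _, by simp⟩

theorem F_ideal_meager
    {X : Type*} [NormedAddCommGroup X] [NormedSpace ℝ X] [CompleteSpace X]
    (x : ℕ → X)
    (hliminf : Filter.liminf (fun n => ‖x n‖) atTop = 0)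
    (I : Set (Set ℕ))
    (hEmpty : ∅ ∈ I)
    (hUnion : ∀ A B : Set ℕ, A ∈ I → B ∈ I → A ∪ B ∈ I)
    (hSub : ∀ A B : Set ℕ, A ⊆ B → B ∈ I → A ∈ I)
    (hProper : (Set.univ : Set ℕ) ∉ I)
    (hFin : ∀ A : Set ℕ, A.Finite → A ∈ I)
    (hBP : IdealHasBaireProperty I)
    (p' : ℕ → ℕ) (hp' : Function.Bijective p')
    (hub : ¬ ∃ M : ℝ, ∀ n : ℕ, ‖∑ i ∈ Finset.range n, x (p' i)‖ ≤ M) :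
    IsMeagre {p : BijSeq |
      ∃ M > (0 : ℝ), {n : ℕ | M < ‖∑ i ∈ Finset.range n, x (p.1 i)‖} ∈ I} := by
  classical
  have hBP' : BaireMeasurableSet {t : ℕ → Bool | {n : ℕ | t n = true} ∈ I} := hBP
  obtain ⟨E, hEne, hEord, hEfin⟩ := exists_blocks hUnion hSub hFin hProper hBP'
  have hEmin : ∀ m c : ℕ, ∃ k, m ≤ k ∧ ∀ n ∈ E k, c ≤ n := by
    have hμmono : StrictMono (fun k => (E k).min' (hEne k)) :=
      strictMono_nat_of_lt_succ (fun k =>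
        hEord k _ ((E k).min'_mem (hEne k)) _ ((E (k + 1)).min'_mem (hEne (k + 1))))
    intro m c
    refine ⟨m + c, Nat.le_add_right _ _, fun n hn => ?_⟩
    calc c ≤ m + c := Nat.le_add_left _ _
      _ ≤ (E (m + c)).min' (hEne _) := hμmono.le_apply
      _ ≤ n := Finset.min'_le _ _ hn
  have hdich : (∀ ε : ℝ, 0 < ε → {j : ℕ | ‖x j‖ < ε}.Infinite) ∨
      (∀ a : ℝ, ∀ᶠ j in atTop, a ≤ ‖x j‖) := by
    by_cases h : ∀ ε : ℝ, 0 < ε → {j : ℕ | ‖x j‖ < ε}.Infinite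
    · exact Or.inl h
    push_neg at h
    obtain ⟨ε, hε, hfin⟩ := h
    right
    have hS0 : ∀ a : ℝ, ∃ b, a ≤ b ∧ ∀ᶠ j in atTop, b ≤ ‖x j‖ := by
      by_contra hno
      push_neg at hno
      obtain ⟨a, ha⟩ := hno
      have hbdd : BddAbove {b : ℝ | ∀ᶠ j in atTop, b ≤ ‖x j‖} := by
        refine ⟨a, fun b hb => ?_⟩
        by_contra hab
        exact ha b (le_of_lt (lt_of_not_ge hab)) (hb.mono fun j hj => not_lt.2 hj)
      have hεS : ε ∈ {b : ℝ | ∀ᶠ j in atTop, b ≤ ‖x j‖} := by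
        rw [Set.mem_setOf_eq, ← Nat.cofinite_eq_atTop, eventually_cofinite]
        exact hfin.subset (fun j hj => lt_of_not_ge hj)
      have hle := le_csSup hbdd hεS
      rw [Filter.liminf_eq] at hliminf
      rw [hliminf] at hle
      linarith
    intro a
    obtain ⟨b, hab, hb⟩ := hS0 a
    exact hb.mono (fun j hj => le_trans hab hj)
  have hstep : ∀ (c : ℝ) (U : Finset ℕ) (s : X), c < ‖s‖ → ∃ j, j ∉ U ∧ c < ‖s + x j‖ := by
    intro c U s hs
    rcases hdich with hd | hd
    · obtain ⟨j, hj⟩ := ((hd (‖s‖ - c) (by linarith)).diff U.finite_toSet).nonempty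
      refine ⟨j, hj.2, ?_⟩
      have hxj : ‖x j‖ < ‖s‖ - c := hj.1
      have h := norm_add_le (s + x j) (-(x j))
      simp only [add_neg_cancel_right, norm_neg] at h
      linarith
    · obtain ⟨j0, hj0⟩ := eventually_atTop.1 (hd (‖s‖ + c + 1))
      refine ⟨max j0 (U.sup id + 1), fun hmem => ?_, ?_⟩
      · have h1 := Finset.le_sup (f := id) hmem
        have h2 := le_max_right j0 (U.sup id + 1)
        simp only [id] at h1
        omega
      · have hnorm := hj0 _ (le_max_left j0 (U.sup id + 1))
        have h := norm_add_le (-s) (s + x (max j0 (U.sup id + 1)))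
        simp only [neg_add_cancel_left, norm_neg] at h
        linarith
  have hpad : ∀ (c : ℝ) (r : ℕ) (U : Finset ℕ) (s : X), c < ‖s‖ →
      ∃ l : List ℕ, l.length = r ∧ l.Nodup ∧ (∀ j ∈ l, j ∉ U) ∧
        ∀ i, i ≤ r → c < ‖s + ∑ i' ∈ Finset.range i, x (l.getD i' 0)‖ := by
    intro c r
    induction r with
    | zero =>
      intro U s hs
      refine ⟨[], rfl, List.nodup_nil, by simp, fun i hi => ?_⟩
      rw [Nat.le_zero.1 hi]
      simpa using hs
    | succ r ih =>
      intro U s hs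
      obtain ⟨j, hjU, hjs⟩ := hstep c U s hs
      obtain ⟨l, hlen, hnd, hUl, hsum⟩ := ih (insert j U) (s + x j) hjs
      refine ⟨j :: l, by simp [hlen], ?_, ?_, ?_⟩
      · exact List.nodup_cons.2 ⟨fun hjl => (hUl j hjl) (Finset.mem_insert_self _ _), hnd⟩
      · intro j' hj'
        rcases List.mem_cons.1 hj' with rfl | hmem
        · exact hjU
        · exact fun hU => (hUl j' hmem) (Finset.mem_insert_of_mem hU)
      · intro i hi
        cases i with
        | zero => simpa using hs
        | succ i =>
          have hih := hsum i (Nat.succ_le_succ_iff.1 hi)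
          rw [Finset.sum_range_succ']
          have hg0 : (j :: l).getD 0 0 = j := rfl
          have hgS : ∀ i' : ℕ, (j :: l).getD (i' + 1) 0 = l.getD i' 0 := fun _ => rfl
          simp only [hg0, hgS]
          have heq : s + (∑ i' ∈ Finset.range i, x (l.getD i' 0) + x j)
              = s + x j + ∑ i' ∈ Finset.range i, x (l.getD i' 0) := by abel
          rw [heq]
          exact hih
  have hubs : ∀ M : ℝ, ∃ n, M < ‖∑ i ∈ Finset.range n, x (p' i)‖ := by
    intro M; by_contra h; push_neg at h; exact hub ⟨M, h⟩
  set C : ℕ → ℕ → Set BijSeq := fun M m =>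
    {p | ∀ k, m ≤ k → ∃ n ∈ E k, ‖∑ i ∈ Finset.range n, x (p.1 i)‖ ≤ (M : ℝ)} with hC
  have hCclosed : ∀ M m : ℕ, IsClosed (C M m) := by
    intro M m
    have hdecomp : C M m = ⋂ (k : ℕ), ⋂ (_ : m ≤ k), ⋃ n ∈ E k,
        {p : BijSeq | ‖∑ i ∈ Finset.range n, x (p.1 i)‖ ≤ (M : ℝ)} := by
      ext p
      simp only [hC, Set.mem_setOf_eq, Set.mem_iInter, Set.mem_iUnion, exists_prop]
    rw [hdecomp]
    refine isClosed_iInter fun k => isClosed_iInter fun _ => ?_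
    refine Set.Finite.isClosed_biUnion (E k).finite_toSet fun n _ => ?_
    have hcont : Continuous fun p : BijSeq => ‖∑ i ∈ Finset.range n, x (p.1 i)‖ := by
      apply Continuous.norm
      apply continuous_finset_sum
      intro i _
      exact (continuous_of_discreteTopology (f := x)).comp
        ((continuous_apply i).comp continuous_subtype_val)
    exact isClosed_le hcont continuous_const
  have hdense : ∀ M m : ℕ, Dense ((C M m)ᶜ) := by
    intro M m
    rw [dense_iff_inter_open]
    rintro U hU ⟨p0, hp0⟩
    obtain ⟨V, hV, hVU⟩ := isOpen_induced_iff.1 hU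
    have hp0V : (p0 : ℕ → ℕ) ∈ V := by rw [← hVU] at hp0; exact hp0
    obtain ⟨Ifin, u, hu, hsub⟩ := isOpen_pi_iff.1 hV p0.1 hp0V
    set N := Ifin.sup id + 1 with hN
    have hbasic : ∀ q : BijSeq, (∀ i, i < N → q.1 i = p0.1 i) → q ∈ U := by
      intro q hq
      rw [← hVU]
      apply hsub
      intro i hi
      rw [hq i (Nat.lt_succ_of_le (Finset.le_sup (f := id) hi))]
      exact (hu i hi).2
    set C0 : ℝ := ∑ i ∈ Finset.range N, ‖x (p0.1 i)‖ with hC0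
    have hC0nonneg : 0 ≤ C0 := Finset.sum_nonneg fun _ _ => norm_nonneg _
    obtain ⟨L, hL⟩ := hubs ((M : ℝ) + C0 + 1)
    set P0 : Finset ℕ := (Finset.range N).image p0.1 with hP0
    set PP : Finset ℕ := (Finset.range L).image p' with hPP
    set G : Finset ℕ := P0 ∪ PP with hG
    have hP0card : P0.card = N := by
      rw [hP0, Finset.card_image_of_injective _ p0.2.1, Finset.card_range]
    have hP0sum : ∑ j ∈ P0, ‖x j‖ = C0 := by
      rw [hP0, Finset.sum_image (fun a _ b _ h => p0.2.1 h)]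
    have hGbig : (M : ℝ) + 1 < ‖∑ j ∈ G, x j‖ := by
      have hsplit : ∑ j ∈ G \ PP, x j + ∑ j ∈ PP, x j = ∑ j ∈ G, x j :=
        Finset.sum_sdiff Finset.subset_union_right
      have h1 : ∑ j ∈ PP, x j = ∑ i ∈ Finset.range L, x (p' i) := by
        rw [hPP, Finset.sum_image (fun a _ b _ h => hp'.1 h)]
      have h2 : ‖∑ j ∈ G \ PP, x j‖ ≤ C0 := by
        calc ‖∑ j ∈ G \ PP, x j‖ ≤ ∑ j ∈ G \ PP, ‖x j‖ := norm_sum_le _ _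
          _ ≤ ∑ j ∈ P0, ‖x j‖ := Finset.sum_le_sum_of_subset_of_nonneg
              (fun j hj => by
                rcases Finset.mem_union.1 (Finset.mem_sdiff.1 hj).1 with hh | hh
                · exact hh
                · exact absurd hh (Finset.mem_sdiff.1 hj).2)
              (fun _ _ _ => norm_nonneg _)
          _ = C0 := hP0sum
      have h4 : ‖∑ i ∈ Finset.range L, x (p' i)‖
          ≤ ‖∑ j ∈ G, x j‖ + ‖∑ j ∈ G \ PP, x j‖ := by
        rw [← h1]
        have heq : ∑ j ∈ PP, x j = ∑ j ∈ G, x j - ∑ j ∈ G \ PP, x j := by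
          rw [← hsplit]; abel
        rw [heq]
        exact norm_sub_le _ _
      linarith
    set g := G.card with hg
    have hNg : N ≤ g := by
      rw [hg, ← hP0card]
      exact Finset.card_le_card Finset.subset_union_left
    obtain ⟨k, hmk, hkmin⟩ := hEmin m g
    set b := (E k).max' (hEne k) + 1 with hb
    have hgb : g ≤ b := by
      have := hkmin _ ((E k).max'_mem (hEne k))
      omega
    obtain ⟨lp, hlplen, hlpnd, hlpU, hlpsum⟩ :=
      hpad ((M : ℝ) + 1) (b - g) G (∑ j ∈ G, x j) hGbig
    set l1 : List ℕ := (List.range N).map p0.1 with hl1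
    set l2 : List ℕ := (G \ P0).sort (· ≤ ·) with hl2
    set Lst : List ℕ := l1 ++ (l2 ++ lp) with hLst
    have hl1len : l1.length = N := by simp [hl1]
    have hl2len : l2.length = g - N := by
      rw [hl2, Finset.length_sort, hg, Finset.card_sdiff_of_subset Finset.subset_union_left, hP0card]
    have hLstlen : Lst.length = b := by
      rw [hLst]
      simp only [List.length_append, hl1len, hl2len, hlplen]
      omega
    have hml1 : ∀ j, j ∈ l1 → j ∈ P0 := by
      intro j hj
      obtain ⟨i, hi, rfl⟩ := List.mem_map.1 hj
      exact Finset.mem_image.2 ⟨i, Finset.mem_range.2 (List.mem_range.1 hi), rfl⟩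
    have hml2 : ∀ j, j ∈ l2 → j ∈ G \ P0 := fun j hj => (Finset.mem_sort _).1 hj
    have hmlp : ∀ j, j ∈ lp → j ∉ G := hlpU
    have hLstnd : Lst.Nodup := by
      rw [hLst, List.nodup_append, List.nodup_append]
      refine ⟨(List.nodup_range : (List.range N).Nodup).map p0.2.1, ⟨Finset.sort_nodup _ _, hlpnd, ?_⟩, ?_⟩
      · intro a ha b hab hne; subst hne
        exact hmlp a hab (Finset.mem_sdiff.1 (hml2 a ha)).1
      · intro a ha b hab hne; subst hne
        have haP0 : a ∈ P0 := hml1 a ha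
        rcases List.mem_append.1 hab with hh | hh
        · exact (Finset.mem_sdiff.1 (hml2 a hh)).2 haP0
        · exact hmlp a hh (Finset.mem_union.2 (Or.inl haP0))
    obtain ⟨q, hqbij, hqget⟩ := exists_bij_extendList Lst hLstnd
    have hqD : ∀ i, i < b → q i = Lst.getD i 0 := by
      intro i hi
      have hi' : i < Lst.length := by omega
      rw [hqget i hi', List.getD_eq_getElem _ _ hi', List.get_eq_getElem]
    have hq1 : ∀ i, i < N → q i = p0.1 i := by
      intro i hi
      have hiN : i < b := by omega
      rw [hqD i hiN, hLst, List.getD_append _ _ _ _ (by rw [hl1len]; exact hi), hl1,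
        List.getD_eq_getElem _ _ (by simpa using hi)]
      simp
    have hq2 : ∀ i, N ≤ i → i < g → q i ∈ G := by
      intro i hNi hgi
      have hib : i < b := by omega
      rw [hqD i hib, hLst, List.getD_append_right _ _ _ _ (by rw [hl1len]; exact hNi),
        List.getD_append _ _ _ _ (by rw [hl2len, hl1len]; omega)]
      have hlt : i - l1.length < l2.length := by rw [hl2len, hl1len]; omega
      rw [List.getD_eq_getElem _ _ hlt]
      exact (Finset.mem_sdiff.1 (hml2 _ (List.getElem_mem _))).1
    have hq3 : ∀ i, g ≤ i → i < b → q i = lp.getD (i - g) 0 := by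
      intro i hgi hib
      rw [hqD i hib, hLst, List.getD_append_right _ _ _ _ (by rw [hl1len]; omega),
        List.getD_append_right _ _ _ _ (by rw [hl2len, hl1len]; omega)]
      congr 1
      rw [hl2len, hl1len]
      omega
    have himg : (Finset.range g).image q = G := by
      apply Finset.eq_of_subset_of_card_le
      · intro j hj
        obtain ⟨i, hi, rfl⟩ := Finset.mem_image.1 hj
        rw [Finset.mem_range] at hi
        by_cases hiN : i < N
        · rw [hq1 i hiN]
          exact Finset.mem_union.2 (Or.inl (Finset.mem_image.2 ⟨i, Finset.mem_range.2 hiN, rfl⟩))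
        · exact hq2 i (le_of_not_gt hiN) hi
      · rw [Finset.card_image_of_injective _ hqbij.1, Finset.card_range]
    have hmain : ∀ n ∈ E k, (M : ℝ) < ‖∑ i ∈ Finset.range n, x (q i)‖ := by
      intro n hn
      have hgn : g ≤ n := hkmin n hn
      have hnb : n < b := by rw [hb]; exact Nat.lt_succ_of_le (Finset.le_max' _ _ hn)
      have hsplit : ∑ i ∈ Finset.range n, x (q i)
          = ∑ i ∈ Finset.range g, x (q i) + ∑ i ∈ Finset.Ico g n, x (q i) := by
        rw [Finset.range_eq_Ico, ← Finset.sum_Ico_consecutive _ (Nat.zero_le g) hgn,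
          ← Finset.range_eq_Ico]
      have hfirst : ∑ i ∈ Finset.range g, x (q i) = ∑ j ∈ G, x j := by
        rw [← himg, Finset.sum_image (fun a _ c _ h => hqbij.1 h)]
      have hsecond : ∑ i ∈ Finset.Ico g n, x (q i)
          = ∑ i' ∈ Finset.range (n - g), x (lp.getD i' 0) := by
        rw [Finset.sum_Ico_eq_sum_range]
        refine Finset.sum_congr rfl (fun i' hi' => ?_)
        rw [Finset.mem_range] at hi'
        rw [hq3 (g + i') (Nat.le_add_right _ _) (by omega)]
        have heq : g + i' - g = i' := by omega
        rw [heq]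
      have hps := hlpsum (n - g) (by omega)
      rw [hsplit, hfirst, hsecond]
      linarith
    refine ⟨⟨q, hqbij⟩, Set.mem_inter (hbasic ⟨q, hqbij⟩ (fun i hi => hq1 i hi)) ?_⟩
    intro hqC
    obtain ⟨n, hnE, hnle⟩ := hqC k hmk
    exact absurd hnle (not_le.2 (hmain n hnE))
  have hCmeagre : ∀ M m : ℕ, IsMeagre (C M m) := by
    intro M m
    refine nwd_isMeagre ?_
    rw [(hCclosed M m).isNowhereDense_iff, interior_eq_empty_iff_dense_compl]
    exact hdense M m
  have hcover : {p : BijSeq |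
      ∃ M > (0 : ℝ), {n : ℕ | M < ‖∑ i ∈ Finset.range n, x (p.1 i)‖} ∈ I}
      ⊆ ⋃ (M : ℕ), ⋃ (m : ℕ), C M m := by
    rintro p ⟨M, hM0, hMI⟩
    have hle : (M : ℝ) ≤ ((⌈M⌉₊ : ℕ) : ℝ) := Nat.le_ceil M
    have hsubI : {n : ℕ | ((⌈M⌉₊ : ℕ) : ℝ) < ‖∑ i ∈ Finset.range n, x (p.1 i)‖} ∈ I :=
      hSub _ _ (fun n hn => lt_of_le_of_lt hle hn) hMI
    obtain ⟨m, hm⟩ := (hEfin _ hsubI).bddAbove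
    refine Set.mem_iUnion.2 ⟨⌈M⌉₊, Set.mem_iUnion.2 ⟨m + 1, ?_⟩⟩
    intro k hk
    by_contra hno
    push_neg at hno
    have hsubset : (↑(E k) : Set ℕ)
        ⊆ {n : ℕ | ((⌈M⌉₊ : ℕ) : ℝ) < ‖∑ i ∈ Finset.range n, x (p.1 i)‖} :=
      fun n hn => hno n (Finset.mem_coe.1 hn)
    have hkm := hm hsubset
    omega
  exact ((isMeagre_iUnion (fun M => isMeagre_iUnion (fun m => hCmeagre M m)))).mono hcover
end

section
/- Let X be a Banach space and (x_n) a sequence in X with limsup ‖x_n‖ = ∞. Then there exists a strictly increasing u : ℕ → ℕ such that both (‖x_{u(n)}‖)_n and (‖∑_{i=1}^n x_{u(i)}‖)_n tend increasingly to infinity. -/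
open Filter

theorem exists_subseries_tendsto_atTop
    {X : Type*} [NormedAddCommGroup X] [NormedSpace ℝ X] [CompleteSpace X]
    (x : ℕ → X)
    (hlimsup : ∀ M : ℝ, ∃ᶠ n in atTop, M < ‖x n‖) :
    ∃ u : ℕ → ℕ, StrictMono u ∧
      StrictMono (fun n => ‖x (u n)‖) ∧
      Tendsto (fun n => ‖x (u n)‖) atTop atTop ∧
      StrictMono (fun n => ‖∑ i ∈ Finset.range n, x (u i)‖) ∧
      Tendsto (fun n => ‖∑ i ∈ Finset.range n, x (u i)‖) atTop atTop := by
  have key : ∀ (N : ℕ) (M : ℝ), ∃ n, N < n ∧ M < ‖x n‖ := by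
    intro N M
    obtain ⟨n, hn, h⟩ := (frequently_atTop.1 (hlimsup M)) (N + 1)
    exact ⟨n, by omega, h⟩
  choose f hf1 hf2 using key
  -- g n = (u n, partial sum ∑_{i ≤ n} x (u i))
  let g : ℕ → ℕ × X := fun n => Nat.rec ((f 0 0, x (f 0 0)) : ℕ × X)
    (fun n p => ⟨f p.1 (max (‖x p.1‖ + 1) (2 * ‖p.2‖ + (n + 1))),
      p.2 + x (f p.1 (max (‖x p.1‖ + 1) (2 * ‖p.2‖ + (n + 1))))⟩) n
  set u : ℕ → ℕ := fun n => (g n).1 with hu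
  have hg0 : g 0 = (f 0 0, x (f 0 0)) := rfl
  have hgs : ∀ n, g (n + 1) = ⟨f (g n).1 (max (‖x (g n).1‖ + 1) (2 * ‖(g n).2‖ + (n + 1))),
      (g n).2 + x (f (g n).1 (max (‖x (g n).1‖ + 1) (2 * ‖(g n).2‖ + (n + 1))))⟩ := fun n => rfl
  have hsum : ∀ n, (g n).2 = ∑ i ∈ Finset.range (n + 1), x (u i) := by
    intro n
    induction n with
    | zero => simp [hg0, hu]
    | succ n ih =>
      rw [Finset.sum_range_succ, ← ih, hgs n]
  have hlt : ∀ n, u n < u (n + 1) := by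
    intro n
    show (g n).1 < (g (n + 1)).1
    rw [hgs n]
    exact hf1 _ _
  have hnorm : ∀ n, max (‖x (u n)‖ + 1) (2 * ‖(g n).2‖ + (n + 1)) < ‖x (u (n + 1))‖ := by
    intro n
    show _ < ‖x (g (n + 1)).1‖
    rw [hgs n]
    exact hf2 _ _
  have hnorm1 : ∀ n, ‖x (u n)‖ + 1 < ‖x (u (n + 1))‖ :=
    fun n => lt_of_le_of_lt (le_max_left _ _) (hnorm n)
  have hnorm2 : ∀ n, 2 * ‖(g n).2‖ + (n + 1) < ‖x (u (n + 1))‖ :=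
    fun n => lt_of_le_of_lt (le_max_right _ _) (hnorm n)
  have h0 : 0 < ‖x (u 0)‖ := by
    have := hf2 0 0
    simpa [hu, hg0] using this
  have hmono : StrictMono u := strictMono_nat_of_lt_succ hlt
  have hnmono : StrictMono (fun n => ‖x (u n)‖) :=
    strictMono_nat_of_lt_succ (fun n => by
      have := hnorm1 n; linarith)
  have hge : ∀ n : ℕ, (n : ℝ) ≤ ‖x (u n)‖ := by
    intro n
    induction n with
    | zero => simp [h0.le]
    | succ n ih =>
      have := hnorm1 n
      push_cast
      linarith
  have hnt : Tendsto (fun n => ‖x (u n)‖) atTop atTop :=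
    tendsto_atTop_mono hge tendsto_natCast_atTop_atTop
  -- partial sums
  have hTs : ∀ n, ‖(g n).2‖ + (n + 1 : ℝ) < ‖∑ i ∈ Finset.range (n + 2), x (u i)‖ := by
    intro n
    have h1 : ∑ i ∈ Finset.range (n + 2), x (u i) = (g n).2 + x (u (n + 1)) := by
      rw [Finset.sum_range_succ, ← hsum n]
    rw [h1]
    have h2 := hnorm2 n
    have h3 : ‖x (u (n + 1))‖ - ‖(g n).2‖ ≤ ‖(g n).2 + x (u (n + 1))‖ := by
      have := norm_sub_norm_le (x (u (n + 1))) (-(g n).2)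
      simp at this
      calc ‖x (u (n+1))‖ - ‖(g n).2‖ = ‖x (u (n+1))‖ - ‖-(g n).2‖ := by rw [norm_neg]
        _ ≤ ‖x (u (n+1)) - -(g n).2‖ := norm_sub_norm_le _ _
        _ = ‖(g n).2 + x (u (n+1))‖ := by rw [sub_neg_eq_add, add_comm]
    linarith
  have hSmono : StrictMono (fun n => ‖∑ i ∈ Finset.range n, x (u i)‖) := by
    apply strictMono_nat_of_lt_succ
    intro n
    match n with
    | 0 => simpa [hu] using h0
    | (m + 1) =>
      have := hTs m
      rw [← hsum m] at *
      linarith [norm_nonneg (g m).2]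
  have hSge : ∀ n : ℕ, (n : ℝ) - 1 ≤ ‖∑ i ∈ Finset.range n, x (u i)‖ := by
    intro n
    match n with
    | 0 => simp
    | 1 => simp
    | (m + 2) =>
      have := hTs m
      push_cast
      have := norm_nonneg (g m).2
      linarith
  have hSt : Tendsto (fun n => ‖∑ i ∈ Finset.range n, x (u i)‖) atTop atTop := by
    apply tendsto_atTop_mono hSge
    exact tendsto_atTop_add_const_right _ _ tendsto_natCast_atTop_atTop
  exact ⟨u, hmono, hnmono, hnt, hSmono, hSt⟩
end
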